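/- arXiv:1709.01590 — 4 statements merged into one kernel-verified Lean document; each statement's English description precedes it below -/
import Mathlib

section
/- If G is a graph on n vertices with minimum degree δ(G) = n/2 + 1 (so n is even), then the edge clique cover number satisfies θ_e(G) ≤ n²/4 − n + 2. -/
open Finset



lemma my_arith (T D Ae Bf H1 E F pc x : ℕ)
    (hId : 2 * T + Bf = 2 * D + Ae) (hAe : Ae ≤ H1) (hS1 : H1 + E = x + 2 * pc)
    (hBf : 2 * x ≤ Bf) (hEF : E = F + 2) (hpcE : pc ≤ E) (hx : F = 0 ∨ pc ≤ x) :
    T ≤ D + 1 := by omega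

lemma my_sum_min_bound (m : ℕ) (s : Fin m → ℕ) (key : Fin m → ℕ)
    (hkey_lt : ∀ c c' : Fin m, s c < s c' → key c < key c')
    (hkey_ne : ∀ c c' : Fin m, c ≠ c' → key c ≠ key c')
    (hsum : ∑ c, s c = 2 * m + 2) :
    m + ∑ p ∈ (Finset.univ ×ˢ Finset.univ).filter
      (fun p : Fin m × Fin m => key p.1 < key p.2), s p.1 ≤ m * m + 1 := by
  classical
  -- key is monotone-reflecting: key c < key c' → s c ≤ s c'
  have hkey_le : ∀ c c' : Fin m, key c < key c' → s c ≤ s c' := by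
    intro c c' hk
    by_contra hlt
    push_neg at hlt
    exact absurd (hkey_lt _ _ hlt) (by omega)
  set e : Fin m → ℕ := fun c => s c - 2 with he
  set f : Fin m → ℕ := fun c => 2 - s c with hf
  have hef0 : ∀ c, 0 < e c → f c = 0 := by intro c; simp only [he, hf]; omega
  set P : Finset (Fin m) := Finset.univ.filter (fun c => 0 < e c) with hP
  set pc : ℕ := P.card with hpc
  set E : ℕ := ∑ c, e c with hE
  set F : ℕ := ∑ c, f c with hF
  set prod : Finset (Fin m × Fin m) := Finset.univ ×ˢ Finset.univ with hprod
  set offD : Finset (Fin m × Fin m) := prod.filter (fun p => ¬ p.1 = p.2) with hoffD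
  set pairs : Finset (Fin m × Fin m) := prod.filter (fun p => key p.1 < key p.2) with hpairs
  set pairs' : Finset (Fin m × Fin m) := prod.filter (fun p => key p.2 < key p.1) with hpairs'
  have hmemprod : ∀ p : Fin m × Fin m, p ∈ prod := by
    intro p; simp [hprod]
  -- swap machinery
  have hswap : ∀ (G : Fin m × Fin m → ℕ),
      ∑ p ∈ pairs, (G p + G (p.2, p.1)) = ∑ p ∈ offD, G p := by
    intro G
    rw [Finset.sum_add_distrib]
    have h1 : ∑ p ∈ pairs, G (p.2, p.1) = ∑ p ∈ pairs', G p := by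
      refine Finset.sum_nbij' (fun p => (p.2, p.1)) (fun p => (p.2, p.1)) ?_ ?_ ?_ ?_ ?_
      · intro p hp; simp only [hpairs, hpairs', mem_filter] at hp ⊢
        exact ⟨hmemprod _, hp.2⟩
      · intro p hp; simp only [hpairs, hpairs', mem_filter] at hp ⊢
        exact ⟨hmemprod _, hp.2⟩
      · intro p _; rfl
      · intro p _; rfl
      · intro p _; rfl
    rw [h1]
    have hdisj : Disjoint pairs pairs' := by
      rw [Finset.disjoint_left]
      intro p hp hp'
      simp only [hpairs, hpairs', mem_filter] at hp hp'
      omega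
    rw [← Finset.sum_union hdisj]
    congr 1
    ext p
    simp only [hpairs, hpairs', hoffD, Finset.mem_union, mem_filter]
    constructor
    · rintro (⟨hm, hk⟩ | ⟨hm, hk⟩) <;> refine ⟨hm, ?_⟩ <;>
        · intro hpe
          rw [hpe] at hk; omega
    · rintro ⟨hm, hne⟩
      have := hkey_ne p.1 p.2 hne
      rcases lt_or_gt_of_ne this with hk | hk
      · exact Or.inl ⟨hm, hk⟩
      · exact Or.inr ⟨hm, hk⟩
  -- diagonal
  have hdiagset : prod.filter (fun p : Fin m × Fin m => p.1 = p.2)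
      = Finset.univ.image (fun c : Fin m => (c, c)) := by
    ext ⟨a, b⟩
    simp only [mem_filter, Finset.mem_image, Finset.mem_univ, true_and]
    constructor
    · rintro ⟨_, h⟩; exact ⟨a, by simp [h]⟩
    · rintro ⟨c, hc⟩
      cases hc
      exact ⟨hmemprod _, rfl⟩
  have hdiaginj : Set.InjOn (fun c : Fin m => (c, c)) (Finset.univ : Finset (Fin m)) := by
    intro a _ b _ hab
    simpa using congrArg Prod.fst hab
  have hdiagsum : ∀ (G : Fin m × Fin m → ℕ),
      ∑ p ∈ prod.filter (fun p : Fin m × Fin m => p.1 = p.2), G p = ∑ c, G (c, c) := by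
    intro G
    rw [hdiagset, Finset.sum_image (fun a ha b hb hab => hdiaginj ha hb hab)]
  -- splitting product sums
  have hsplit : ∀ (G : Fin m × Fin m → ℕ),
      ∑ c, G (c, c) + ∑ p ∈ offD, G p = ∑ p ∈ prod, G p := by
    intro G
    rw [← hdiagsum G, hoffD]
    exact Finset.sum_filter_add_sum_filter_not prod (fun p => p.1 = p.2) G
  -- the three guarded sums
  set h1 : Fin m × Fin m → ℕ := fun p => if 0 < e p.2 then e p.1 else 0 with hh1
  set g1 : Fin m × Fin m → ℕ := fun p => if 0 < e p.2 then f p.1 else 0 with hg1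
  set g2 : Fin m × Fin m → ℕ := fun p => if 0 < e p.1 then f p.2 else 0 with hg2
  have hsum_ite : ∀ (φ : Fin m → ℕ) (c : Fin m),
      (∑ c' : Fin m, if 0 < e c' then φ c else 0) = pc * φ c := by
    intro φ c
    rw [Finset.sum_ite, Finset.sum_const_zero, add_zero, Finset.sum_const, smul_eq_mul]
    try rfl
  have hS1 : ∑ p ∈ offD, h1 p + E = pc * E := by
    have hp1 : ∑ p ∈ prod, h1 p = pc * E := by
      rw [hprod, Finset.sum_product]
      calc (∑ c : Fin m, ∑ c' : Fin m, h1 (c, c'))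
          = ∑ c : Fin m, pc * e c := by
            refine Finset.sum_congr rfl (fun c _ => ?_)
            exact hsum_ite e c
        _ = pc * E := by rw [hE, Finset.mul_sum]
    have hd1 : ∑ c, h1 (c, c) = E := by
      rw [hE]
      refine Finset.sum_congr rfl (fun c _ => ?_)
      simp only [hh1]
      split_ifs with hc <;> omega
    have := hsplit h1
    omega
  have hS2 : ∑ p ∈ offD, g1 p = pc * F := by
    have hp1 : ∑ p ∈ prod, g1 p = pc * F := by
      rw [hprod, Finset.sum_product]
      calc (∑ c : Fin m, ∑ c' : Fin m, g1 (c, c'))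
          = ∑ c : Fin m, pc * f c := by
            refine Finset.sum_congr rfl (fun c _ => ?_)
            exact hsum_ite f c
        _ = pc * F := by rw [hF, Finset.mul_sum]
    have hd1 : ∑ c, g1 (c, c) = 0 := by
      refine Finset.sum_eq_zero (fun c _ => ?_)
      simp only [hg1]
      split_ifs with hc
      · exact hef0 c hc
      · rfl
    have := hsplit g1
    omega
  have hS3 : ∑ p ∈ offD, g2 p = pc * F := by
    have hp1 : ∑ p ∈ prod, g2 p = pc * F := by
      rw [hprod, Finset.sum_product]
      calc (∑ c : Fin m, ∑ c' : Fin m, g2 (c, c'))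
          = ∑ c : Fin m, if 0 < e c then F else 0 := by
            refine Finset.sum_congr rfl (fun c _ => ?_)
            simp only [hg2]
            split_ifs with hc
            · rfl
            · exact Finset.sum_const_zero
        _ = pc * F := by
            rw [Finset.sum_ite, Finset.sum_const_zero, add_zero, Finset.sum_const, smul_eq_mul]
            try rfl
    have hd1 : ∑ c, g2 (c, c) = 0 := by
      refine Finset.sum_eq_zero (fun c _ => ?_)
      simp only [hg2]
      split_ifs with hc
      · exact hef0 c hc
      · rfl
    have := hsplit g2
    omega
  -- selectors
  set Fs : Fin m × Fin m → ℕ := fun p => if key p.1 < key p.2 then s p.1 else s p.2 with hFs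
  set Fe : Fin m × Fin m → ℕ := fun p => if key p.1 < key p.2 then e p.1 else e p.2 with hFe
  set Ff : Fin m × Fin m → ℕ := fun p => if key p.1 < key p.2 then f p.1 else f p.2 with hFf
  -- pointwise facts on offD
  have hkor : ∀ p : Fin m × Fin m, p ∈ offD → ¬ key p.1 < key p.2 → key p.2 < key p.1 := by
    intro p hp hk
    have hne : p.1 ≠ p.2 := by
      simp only [hoffD, mem_filter] at hp; exact hp.2
    exact ((hkey_ne p.1 p.2 hne).lt_or_gt).resolve_left hk
  have hpt1 : ∀ p ∈ offD, Fs p + Ff p = 2 + Fe p := by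
    intro p hp
    by_cases hk : key p.1 < key p.2
    · simp only [hFs, hFe, hFf, if_pos hk, he, hf]; omega
    · simp only [hFs, hFe, hFf, if_neg hk, he, hf]; omega
  have hpt2 : ∀ p ∈ offD, Fe p ≤ h1 p := by
    intro p hp
    by_cases hk : key p.1 < key p.2
    · have hs12 : s p.1 ≤ s p.2 := hkey_le _ _ hk
      simp only [hFe, hh1, if_pos hk, he]
      split_ifs with hc <;> omega
    · have hs21 : s p.2 ≤ s p.1 := hkey_le _ _ (hkor p hp hk)
      simp only [hFe, hh1, if_neg hk, he]
      split_ifs with hc <;> omega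
  have hpt3 : ∀ p ∈ offD, g1 p + g2 p ≤ Ff p := by
    intro p hp
    by_cases hk : key p.1 < key p.2
    · have hs12 : s p.1 ≤ s p.2 := hkey_le _ _ hk
      simp only [hFf, hg1, hg2, if_pos hk, he, hf]
      split_ifs with hc1 hc2 hc2 <;> omega
    · have hs21 : s p.2 ≤ s p.1 := hkey_le _ _ (hkor p hp hk)
      simp only [hFf, hg1, hg2, if_neg hk, he, hf]
      split_ifs with hc1 hc2 hc2 <;> omega
  -- sum identities over offD
  have hId : ∑ p ∈ offD, Fs p + ∑ p ∈ offD, Ff p = 2 * offD.card + ∑ p ∈ offD, Fe p := by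
    rw [← Finset.sum_add_distrib]
    have : ∑ p ∈ offD, (Fs p + Ff p) = ∑ p ∈ offD, (2 + Fe p) :=
      Finset.sum_congr rfl (fun p hp => hpt1 p hp)
    rw [this, Finset.sum_add_distrib, Finset.sum_const, smul_eq_mul, mul_comm]
  have hAe : ∑ p ∈ offD, Fe p ≤ ∑ p ∈ offD, h1 p :=
    Finset.sum_le_sum (fun p hp => hpt2 p hp)
  have hBf : ∑ p ∈ offD, g1 p + ∑ p ∈ offD, g2 p ≤ ∑ p ∈ offD, Ff p := by
    rw [← Finset.sum_add_distrib]
    exact Finset.sum_le_sum (fun p hp => hpt3 p hp)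
  -- Fs over offD is twice the target sum
  set T : ℕ := ∑ p ∈ pairs, s p.1 with hT
  have h2T : ∑ p ∈ offD, Fs p = 2 * T := by
    rw [← hswap Fs, hT, Finset.mul_sum]
    refine Finset.sum_congr rfl (fun p hp => ?_)
    simp only [hpairs, mem_filter] at hp
    have hk := hp.2
    have hk2 : ¬ key ((p.2, p.1).1) < key ((p.2, p.1).2) := by
      simp only []; omega
    simp only [hFs, if_pos hk, if_neg hk2]
    omega
  -- cardinality of offD
  have hcard : offD.card + m = m * m := by
    have h1 : (prod.filter (fun p : Fin m × Fin m => p.1 = p.2)).card + offD.card = prod.card := by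
      rw [hoffD]
      exact Finset.card_filter_add_card_filter_not (s := prod) (fun p : Fin m × Fin m => p.1 = p.2)
    have h2 : (prod.filter (fun p : Fin m × Fin m => p.1 = p.2)).card = m := by
      rw [hdiagset, Finset.card_image_of_injOn hdiaginj]
      simp
    have h3 : prod.card = m * m := by
      rw [hprod, Finset.card_product]
      simp
    omega
  -- basic size facts
  have hpcE : pc ≤ E := by
    have h1 : pc • 1 ≤ ∑ c ∈ P, e c := by
      refine Finset.card_nsmul_le_sum P e 1 (fun c hc => ?_)
      simp only [hP, mem_filter] at hc
      omega
    have h2 : ∑ c ∈ P, e c ≤ E := by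
      rw [hE]
      exact Finset.sum_le_sum_of_subset (Finset.subset_univ P)
    simpa using h1.trans h2
  have hEF : E = F + 2 := by
    have h1 : ∀ c : Fin m, s c + f c = e c + 2 := by
      intro c; simp only [he, hf]; omega
    have h2 : ∑ c, (s c + f c) = ∑ c, (e c + 2) :=
      Finset.sum_congr rfl (fun c _ => h1 c)
    rw [Finset.sum_add_distrib, Finset.sum_add_distrib, Finset.sum_const] at h2
    simp only [smul_eq_mul, Finset.card_univ, Fintype.card_fin] at h2
    rw [hsum] at h2
    rw [hE, hF]
    omega
  -- final arithmetic
  have hpe : pc * E = pc * F + 2 * pc := by rw [hEF]; ring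
  have harith : T ≤ offD.card + 1 := by
    have hId2 : 2 * T + ∑ p ∈ offD, Ff p = 2 * offD.card + ∑ p ∈ offD, Fe p := by
      rw [← h2T]; exact hId
    have hBf2 : 2 * (pc * F) ≤ ∑ p ∈ offD, Ff p := by omega
    have hS1' : ∑ p ∈ offD, h1 p + E = pc * F + 2 * pc := by
      rw [← hpe]; exact hS1
    have hx : F = 0 ∨ pc ≤ pc * F := by
      rcases Nat.eq_zero_or_pos F with hq | hq
      · exact Or.inl hq
      · exact Or.inr (Nat.le_mul_of_pos_right pc hq)
    exact my_arith T offD.card (∑ p ∈ offD, Fe p) (∑ p ∈ offD, Ff p)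
      (∑ p ∈ offD, h1 p) E F pc (pc * F) hId2 hAe hS1' hBf2 hEF hpcE hx
  calc m + T ≤ m + (offD.card + 1) := by omega
    _ = m * m + 1 := by omega



lemma my_colorable_of_degree_lt (m : ℕ) :
    ∀ (n : ℕ) {V : Type u} [Fintype V] [DecidableEq V] (H : SimpleGraph V)
      [DecidableRel H.Adj], Fintype.card V ≤ n → (∀ v, H.degree v < m) → H.Colorable m := by
  intro n
  induction n with
  | zero =>
    intro V _ _ H _ hcard _
    have : IsEmpty V := by
      rw [← Fintype.card_eq_zero_iff]
      omega
    exact SimpleGraph.Colorable.of_isEmpty (G := H) m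
  | succ n IH =>
    intro V _ _ H _ hcard hm
    rcases isEmpty_or_nonempty V with hVe | hV
    · exact SimpleGraph.Colorable.of_isEmpty (G := H) m
    · obtain ⟨v⟩ := hV
      let H' : SimpleGraph {w : V // w ≠ v} := H.comap (Subtype.val)
      haveI : DecidableRel H'.Adj := fun a b =>
        (inferInstance : Decidable (H.Adj a.1 b.1))
      have hdeg : ∀ a : {w : V // w ≠ v}, H'.degree a < m := by
        intro a
        refine lt_of_le_of_lt ?_ (hm a.1)
        apply Finset.card_le_card_of_injOn (fun x => x.1)
        · intro x hx
          simp only [Finset.mem_coe, SimpleGraph.mem_neighborFinset] at hx ⊢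
          exact hx
        · exact Subtype.val_injective.injOn
      have hlt : Fintype.card {w : V // w ≠ v} < Fintype.card V :=
        Fintype.card_subtype_lt (x := v) (by simp)
      obtain ⟨C'⟩ := IH H' (by omega) hdeg
      -- choose a color for v not used by its neighbors
      let t : Finset (Fin m) := (H.neighborFinset v).attach.image
        (fun w => C' ⟨w.1, (H.ne_of_adj ((H.mem_neighborFinset v w.1).mp w.2)).symm⟩)
      have htcard : t.card < m := by
        refine lt_of_le_of_lt (Finset.card_image_le.trans ?_) (hm v)
        rw [Finset.card_attach]
        exact le_of_eq rfl
      obtain ⟨c, hc⟩ : ∃ c : Fin m, c ∉ t := by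
        by_contra hcon
        push_neg at hcon
        have : (Finset.univ : Finset (Fin m)) ⊆ t := fun c _ => hcon c
        have := Finset.card_le_card this
        simp only [Finset.card_univ, Fintype.card_fin] at this
        omega
      refine ⟨SimpleGraph.Coloring.mk (fun w => if h : w = v then c else C' ⟨w, h⟩) ?_⟩
      intro a b hab
      have hne : a ≠ b := H.ne_of_adj hab
      split_ifs with ha hb hb
      · exact absurd (ha.trans hb.symm) hne
      · intro heq
        apply hc
        rw [heq]
        exact Finset.mem_image.mpr
          ⟨⟨b, (H.mem_neighborFinset v b).mpr (by rw [← ha]; exact hab)⟩,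
            Finset.mem_attach _ _, rfl⟩
      · intro heq
        apply hc
        rw [← heq]
        exact Finset.mem_image.mpr
          ⟨⟨a, (H.mem_neighborFinset v a).mpr (by rw [← hb]; exact hab.symm)⟩,
            Finset.mem_attach _ _, rfl⟩
      · exact C'.valid (SimpleGraph.comap_adj.mpr hab)



theorem test_main {V : Type*} [Fintype V]
    [DecidableEq V] (G : SimpleGraph V) [DecidableRel G.Adj]
    (h : 2 * G.minDegree = Fintype.card V + 2) :
    True := by
  classical
  -- nonemptiness and basic numbers
  have hne : Nonempty V := by
    by_contra hemp
    rw [not_nonempty_iff] at hemp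
    have h0 : Fintype.card V = 0 := Fintype.card_eq_zero
    have hmd : G.minDegree = 0 := by
      simp [SimpleGraph.minDegree, Finset.univ_eq_empty]
    omega
  obtain ⟨v0, hv0⟩ := G.exists_minimal_degree_vertex
  have hv0lt : G.degree v0 < Fintype.card V := G.degree_lt_card_verts v0
  set m : ℕ := G.minDegree - 2 with hm
  have hm1 : 1 ≤ m := by omega
  have hnm : Fintype.card V = 2 * m + 2 := by omega
  have hdm : G.minDegree = m + 2 := by omega
  -- greedy coloring of the complement
  haveI : DecidableRel Gᶜ.Adj := fun a b => inferInstanceAs (Decidable (a ≠ b ∧ ¬ G.Adj a b))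
  have hcd : ∀ v, Gᶜ.degree v < m := by
    intro v
    have h1 : Gᶜ.degree v = Fintype.card V - 1 - G.degree v := SimpleGraph.degree_compl G v
    have h2 := G.minDegree_le_degree v
    have h3 := G.degree_lt_card_verts v
    omega
  obtain ⟨C⟩ := my_colorable_of_degree_lt m (Fintype.card V) Gᶜ le_rfl hcd
  set cls : Fin m → Finset V := fun c => Finset.univ.filter (fun v => C v = c) with hcls
  set s : Fin m → ℕ := fun c => (cls c).card with hs
  have hsum : ∑ c, s c = 2 * m + 2 := by
    have h0 : (Finset.univ : Finset V).card
        = ∑ c : Fin m, (Finset.univ.filter (fun v => C v = c)).card :=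
      Finset.card_eq_sum_card_fiberwise (fun v _ => Finset.mem_univ (C v))
    calc ∑ c, s c = ∑ c : Fin m, (Finset.univ.filter (fun v => C v = c)).card := by
          simp only [hs, hcls]
      _ = (Finset.univ : Finset V).card := h0.symm
      _ = 2 * m + 2 := by rw [Finset.card_univ, hnm]
  set key : Fin m → ℕ := fun c => (m + 1) * s c + c.val with hkey
  have hkey_lt : ∀ c c' : Fin m, s c < s c' → key c < key c' := by
    intro c c' hlt
    have hc : c.val < m + 1 := by have := c.isLt; omega
    calc key c = (m + 1) * s c + c.val := rfl
      _ < (m + 1) * s c + (m + 1) := by omega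
      _ = (m + 1) * (s c + 1) := by ring
      _ ≤ (m + 1) * s c' := Nat.mul_le_mul_left _ (by omega)
      _ ≤ key c' := Nat.le_add_right _ _
  have hkey_ne : ∀ c c' : Fin m, c ≠ c' → key c ≠ key c' := by
    intro c c' hcne heq
    rcases lt_trichotomy (s c) (s c') with h1 | h1 | h1
    · exact absurd heq (Nat.ne_of_lt (hkey_lt _ _ h1))
    · apply hcne
      apply Fin.ext
      have h2 : (m + 1) * s c + c.val = (m + 1) * s c' + c'.val := heq
      rw [h1] at h2
      omega
    · exact absurd heq.symm (Nat.ne_of_lt (hkey_lt _ _ h1))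
  set pairs := (Finset.univ ×ˢ Finset.univ).filter
    (fun p : Fin m × Fin m => key p.1 < key p.2) with hpairs
  set crossClq : Fin m × Fin m → Finset (Finset V) :=
    fun p => (cls p.1).image (fun a => insert a ((G.neighborFinset a) ∩ cls p.2)) with hcross
  set 𝒞 : Finset (Finset V) := (Finset.univ.image cls) ∪ pairs.biUnion crossClq with hCC
  -- same color classes are cliques
  have hsame : ∀ (c : Fin m) (u w : V), u ∈ cls c → w ∈ cls c → u ≠ w → G.Adj u w := by
    intro c u w hu hw huw
    simp only [hcls, Finset.mem_filter] at hu hw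
    by_contra hadj
    exact C.valid ((G.compl_adj u w).mpr ⟨huw, hadj⟩) (hu.2.trans hw.2.symm)
  -- all members of 𝒞 are cliques
  have hclq : ∀ K ∈ 𝒞, G.IsClique (K : Set V) := by
    intro K hK
    rcases Finset.mem_union.mp hK with hK | hK
    · obtain ⟨c, _, rfl⟩ := Finset.mem_image.mp hK
      rw [SimpleGraph.isClique_iff]
      intro u hu w hw huw
      exact hsame c u w (Finset.mem_coe.mp hu) (Finset.mem_coe.mp hw) huw
    · obtain ⟨p, hp, hKp⟩ := Finset.mem_biUnion.mp hK
      obtain ⟨a, ha, rfl⟩ := Finset.mem_image.mp (by simpa [hcross] using hKp)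
      rw [SimpleGraph.isClique_iff]
      intro u hu w hw huw
      have hu' : u = a ∨ (G.Adj a u ∧ u ∈ cls p.2) := by
        rcases Finset.mem_insert.mp (Finset.mem_coe.mp hu) with h1 | h1
        · exact Or.inl h1
        · have := Finset.mem_inter.mp h1
          exact Or.inr ⟨(SimpleGraph.mem_neighborFinset _ _ _).mp this.1, this.2⟩
      have hw' : w = a ∨ (G.Adj a w ∧ w ∈ cls p.2) := by
        rcases Finset.mem_insert.mp (Finset.mem_coe.mp hw) with h1 | h1
        · exact Or.inl h1
        · have := Finset.mem_inter.mp h1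
          exact Or.inr ⟨(SimpleGraph.mem_neighborFinset _ _ _).mp this.1, this.2⟩
      rcases hu' with rfl | ⟨hu1, hu2⟩
      · rcases hw' with rfl | ⟨hw1, hw2⟩
        · exact absurd rfl huw
        · exact hw1
      · rcases hw' with rfl | ⟨hw1, hw2⟩
        · exact hu1.symm
        · exact hsame p.2 u w hu2 hw2 huw
  -- covering
  have hcov : ∀ u v : V, G.Adj u v → ∃ K ∈ 𝒞, u ∈ K ∧ v ∈ K := by
    intro u v huv
    by_cases hcc : C u = C v
    · refine ⟨cls (C u), Finset.mem_union_left _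
        (Finset.mem_image_of_mem cls (Finset.mem_univ (C u))), ?_, ?_⟩
      · simp [hcls]
      · simp [hcls, ← hcc]
    · rcases lt_or_gt_of_ne (hkey_ne _ _ hcc) with hk | hk
      · refine ⟨insert u ((G.neighborFinset u) ∩ cls (C v)), ?_, Finset.mem_insert_self _ _, ?_⟩
        · apply Finset.mem_union_right
          apply Finset.mem_biUnion.mpr
          refine ⟨(C u, C v), ?_, ?_⟩
          · simp [hpairs, Finset.mem_filter, hk]
          · simp only [hcross]
            exact Finset.mem_image_of_mem _ (by simp [hcls])
        · exact Finset.mem_insert_of_mem (Finset.mem_inter.mpr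
            ⟨(SimpleGraph.mem_neighborFinset _ _ _).mpr huv, by simp [hcls]⟩)
      · refine ⟨insert v ((G.neighborFinset v) ∩ cls (C u)), ?_, ?_, Finset.mem_insert_self _ _⟩
        · apply Finset.mem_union_right
          apply Finset.mem_biUnion.mpr
          refine ⟨(C v, C u), ?_, ?_⟩
          · simp [hpairs, Finset.mem_filter, hk]
          · simp only [hcross]
            exact Finset.mem_image_of_mem _ (by simp [hcls])
        · exact Finset.mem_insert_of_mem (Finset.mem_inter.mpr
            ⟨(SimpleGraph.mem_neighborFinset _ _ _).mpr huv.symm, by simp [hcls]⟩)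
  -- counting
  have hcount : 𝒞.card ≤ m * m + 1 := by
    have h1 : (Finset.univ.image cls).card ≤ m := by
      refine Finset.card_image_le.trans ?_
      simp
    have h2 : (pairs.biUnion crossClq).card ≤ ∑ p ∈ pairs, s p.1 := by
      refine Finset.card_biUnion_le.trans (Finset.sum_le_sum fun p _ => ?_)
      simp only [hcross]
      exact Finset.card_image_le.trans (le_of_eq rfl)
    have h3 : m + ∑ p ∈ pairs, s p.1 ≤ m * m + 1 := by
      rw [hpairs]
      exact my_sum_min_bound m s key hkey_lt hkey_ne hsum
    have h6 : 𝒞.card ≤ m + ∑ p ∈ pairs, s p.1 := by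
      calc 𝒞.card = ((Finset.univ.image cls) ∪ pairs.biUnion crossClq).card := by rw [hCC]
        _ ≤ (Finset.univ.image cls).card + (pairs.biUnion crossClq).card :=
            Finset.card_union_le _ _
        _ ≤ m + ∑ p ∈ pairs, s p.1 := add_le_add h1 h2
    exact h6.trans h3
  trivial


/-- A set of cliques `𝒞` is an edge clique cover of `G` if every clique in `𝒞` is a clique
of `G` and every edge of `G` is contained in some member of `𝒞`. -/
def IsEdgeCliqueCover {V : Type*} (G : SimpleGraph V) (𝒞 : Finset (Finset V)) : Prop :=
  (∀ K ∈ 𝒞, G.IsClique (K : Set V)) ∧ ∀ u v : V, G.Adj u v → ∃ K ∈ 𝒞, u ∈ K ∧ v ∈ K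

/-- The edge clique cover number `θ_e(G)`: the minimum number of cliques needed to cover
all edges of `G`. -/
noncomputable def edgeCliqueCoverNumber {V : Type*} (G : SimpleGraph V) : ℕ :=
  sInf {m : ℕ | ∃ 𝒞 : Finset (Finset V), IsEdgeCliqueCover G 𝒞 ∧ 𝒞.card = m}

/-- If `G` is a graph on `n` vertices with minimum degree `δ(G) = n/2 + 1` (so `n` is even),
then `θ_e(G) ≤ n²/4 − n + 2`. -/
theorem edgeCliqueCoverNumber_le_of_minDegree_eq_half_plus_one {V : Type*} [Fintype V]
    [DecidableEq V] (G : SimpleGraph V) [DecidableRel G.Adj]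
    (h : 2 * G.minDegree = Fintype.card V + 2) :
    (edgeCliqueCoverNumber G : ℝ) ≤
      (Fintype.card V : ℝ) ^ 2 / 4 - (Fintype.card V : ℝ) + 2 := by
  classical
  -- nonemptiness and basic numbers
  have hne : Nonempty V := by
    by_contra hemp
    rw [not_nonempty_iff] at hemp
    have h0 : Fintype.card V = 0 := Fintype.card_eq_zero
    have hmd : G.minDegree = 0 := by
      simp [SimpleGraph.minDegree, Finset.univ_eq_empty]
    omega
  obtain ⟨v0, hv0⟩ := G.exists_minimal_degree_vertex
  have hv0lt : G.degree v0 < Fintype.card V := G.degree_lt_card_verts v0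
  set m : ℕ := G.minDegree - 2 with hm
  have hm1 : 1 ≤ m := by omega
  have hnm : Fintype.card V = 2 * m + 2 := by omega
  have hdm : G.minDegree = m + 2 := by omega
  -- greedy coloring of the complement
  haveI : DecidableRel Gᶜ.Adj := fun a b => inferInstanceAs (Decidable (a ≠ b ∧ ¬ G.Adj a b))
  have hcd : ∀ v, Gᶜ.degree v < m := by
    intro v
    have h1 : Gᶜ.degree v = Fintype.card V - 1 - G.degree v := SimpleGraph.degree_compl G v
    have h2 := G.minDegree_le_degree v
    have h3 := G.degree_lt_card_verts v
    omega
  obtain ⟨C⟩ := my_colorable_of_degree_lt m (Fintype.card V) Gᶜ le_rfl hcd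
  set cls : Fin m → Finset V := fun c => Finset.univ.filter (fun v => C v = c) with hcls
  set s : Fin m → ℕ := fun c => (cls c).card with hs
  have hsum : ∑ c, s c = 2 * m + 2 := by
    have h0 : (Finset.univ : Finset V).card
        = ∑ c : Fin m, (Finset.univ.filter (fun v => C v = c)).card :=
      Finset.card_eq_sum_card_fiberwise (fun v _ => Finset.mem_univ (C v))
    calc ∑ c, s c = ∑ c : Fin m, (Finset.univ.filter (fun v => C v = c)).card := by
          simp only [hs, hcls]
      _ = (Finset.univ : Finset V).card := h0.symm
      _ = 2 * m + 2 := by rw [Finset.card_univ, hnm]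
  set key : Fin m → ℕ := fun c => (m + 1) * s c + c.val with hkey
  have hkey_lt : ∀ c c' : Fin m, s c < s c' → key c < key c' := by
    intro c c' hlt
    have hc : c.val < m + 1 := by have := c.isLt; omega
    calc key c = (m + 1) * s c + c.val := rfl
      _ < (m + 1) * s c + (m + 1) := by omega
      _ = (m + 1) * (s c + 1) := by ring
      _ ≤ (m + 1) * s c' := Nat.mul_le_mul_left _ (by omega)
      _ ≤ key c' := Nat.le_add_right _ _
  have hkey_ne : ∀ c c' : Fin m, c ≠ c' → key c ≠ key c' := by
    intro c c' hcne heq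
    rcases lt_trichotomy (s c) (s c') with h1 | h1 | h1
    · exact absurd heq (Nat.ne_of_lt (hkey_lt _ _ h1))
    · apply hcne
      apply Fin.ext
      have h2 : (m + 1) * s c + c.val = (m + 1) * s c' + c'.val := heq
      rw [h1] at h2
      omega
    · exact absurd heq.symm (Nat.ne_of_lt (hkey_lt _ _ h1))
  set pairs := (Finset.univ ×ˢ Finset.univ).filter
    (fun p : Fin m × Fin m => key p.1 < key p.2) with hpairs
  set crossClq : Fin m × Fin m → Finset (Finset V) :=
    fun p => (cls p.1).image (fun a => insert a ((G.neighborFinset a) ∩ cls p.2)) with hcross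
  set 𝒞 : Finset (Finset V) := (Finset.univ.image cls) ∪ pairs.biUnion crossClq with hCC
  -- same color classes are cliques
  have hsame : ∀ (c : Fin m) (u w : V), u ∈ cls c → w ∈ cls c → u ≠ w → G.Adj u w := by
    intro c u w hu hw huw
    simp only [hcls, Finset.mem_filter] at hu hw
    by_contra hadj
    exact C.valid ((G.compl_adj u w).mpr ⟨huw, hadj⟩) (hu.2.trans hw.2.symm)
  -- all members of 𝒞 are cliques
  have hclq : ∀ K ∈ 𝒞, G.IsClique (K : Set V) := by
    intro K hK
    rcases Finset.mem_union.mp hK with hK | hK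
    · obtain ⟨c, _, rfl⟩ := Finset.mem_image.mp hK
      rw [SimpleGraph.isClique_iff]
      intro u hu w hw huw
      exact hsame c u w (Finset.mem_coe.mp hu) (Finset.mem_coe.mp hw) huw
    · obtain ⟨p, hp, hKp⟩ := Finset.mem_biUnion.mp hK
      obtain ⟨a, ha, rfl⟩ := Finset.mem_image.mp (by simpa [hcross] using hKp)
      rw [SimpleGraph.isClique_iff]
      intro u hu w hw huw
      have hu' : u = a ∨ (G.Adj a u ∧ u ∈ cls p.2) := by
        rcases Finset.mem_insert.mp (Finset.mem_coe.mp hu) with h1 | h1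
        · exact Or.inl h1
        · have := Finset.mem_inter.mp h1
          exact Or.inr ⟨(SimpleGraph.mem_neighborFinset _ _ _).mp this.1, this.2⟩
      have hw' : w = a ∨ (G.Adj a w ∧ w ∈ cls p.2) := by
        rcases Finset.mem_insert.mp (Finset.mem_coe.mp hw) with h1 | h1
        · exact Or.inl h1
        · have := Finset.mem_inter.mp h1
          exact Or.inr ⟨(SimpleGraph.mem_neighborFinset _ _ _).mp this.1, this.2⟩
      rcases hu' with rfl | ⟨hu1, hu2⟩
      · rcases hw' with rfl | ⟨hw1, hw2⟩
        · exact absurd rfl huw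
        · exact hw1
      · rcases hw' with rfl | ⟨hw1, hw2⟩
        · exact hu1.symm
        · exact hsame p.2 u w hu2 hw2 huw
  -- covering
  have hcov : ∀ u v : V, G.Adj u v → ∃ K ∈ 𝒞, u ∈ K ∧ v ∈ K := by
    intro u v huv
    by_cases hcc : C u = C v
    · refine ⟨cls (C u), Finset.mem_union_left _
        (Finset.mem_image_of_mem cls (Finset.mem_univ (C u))), ?_, ?_⟩
      · simp [hcls]
      · simp [hcls, ← hcc]
    · rcases lt_or_gt_of_ne (hkey_ne _ _ hcc) with hk | hk
      · refine ⟨insert u ((G.neighborFinset u) ∩ cls (C v)), ?_, Finset.mem_insert_self _ _, ?_⟩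
        · apply Finset.mem_union_right
          apply Finset.mem_biUnion.mpr
          refine ⟨(C u, C v), ?_, ?_⟩
          · simp [hpairs, Finset.mem_filter, hk]
          · simp only [hcross]
            exact Finset.mem_image_of_mem _ (by simp [hcls])
        · exact Finset.mem_insert_of_mem (Finset.mem_inter.mpr
            ⟨(SimpleGraph.mem_neighborFinset _ _ _).mpr huv, by simp [hcls]⟩)
      · refine ⟨insert v ((G.neighborFinset v) ∩ cls (C u)), ?_, ?_, Finset.mem_insert_self _ _⟩
        · apply Finset.mem_union_right
          apply Finset.mem_biUnion.mpr
          refine ⟨(C v, C u), ?_, ?_⟩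
          · simp [hpairs, Finset.mem_filter, hk]
          · simp only [hcross]
            exact Finset.mem_image_of_mem _ (by simp [hcls])
        · exact Finset.mem_insert_of_mem (Finset.mem_inter.mpr
            ⟨(SimpleGraph.mem_neighborFinset _ _ _).mpr huv.symm, by simp [hcls]⟩)
  -- counting
  have hcount : 𝒞.card ≤ m * m + 1 := by
    have h1 : (Finset.univ.image cls).card ≤ m := by
      refine Finset.card_image_le.trans ?_
      simp
    have h2 : (pairs.biUnion crossClq).card ≤ ∑ p ∈ pairs, s p.1 := by
      refine Finset.card_biUnion_le.trans (Finset.sum_le_sum fun p _ => ?_)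
      simp only [hcross]
      exact Finset.card_image_le.trans (le_of_eq rfl)
    have h3 : m + ∑ p ∈ pairs, s p.1 ≤ m * m + 1 := by
      rw [hpairs]
      exact my_sum_min_bound m s key hkey_lt hkey_ne hsum
    have h6 : 𝒞.card ≤ m + ∑ p ∈ pairs, s p.1 := by
      calc 𝒞.card = ((Finset.univ.image cls) ∪ pairs.biUnion crossClq).card := by rw [hCC]
        _ ≤ (Finset.univ.image cls).card + (pairs.biUnion crossClq).card :=
            Finset.card_union_le _ _
        _ ≤ m + ∑ p ∈ pairs, s p.1 := add_le_add h1 h2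
    exact h6.trans h3
  have hmem : 𝒞.card ∈ {k : ℕ | ∃ 𝒟 : Finset (Finset V), IsEdgeCliqueCover G 𝒟 ∧ 𝒟.card = k} :=
    ⟨𝒞, ⟨hclq, hcov⟩, rfl⟩
  have hθ : edgeCliqueCoverNumber G ≤ m * m + 1 :=
    le_trans (Nat.sInf_le hmem) hcount
  have hcast : (edgeCliqueCoverNumber G : ℝ) ≤ (m : ℝ) * m + 1 := by exact_mod_cast hθ
  rw [hnm]
  push_cast
  have hring : ((2 * (m : ℝ) + 2)) ^ 2 / 4 - (2 * (m : ℝ) + 2) + 2 = (m : ℝ) * m + 1 := by ring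
  linarith [hcast, hring]
end

section
/- For every graph G on n vertices, the triangle clique cover number satisfies θ_△(G) ≤ k_3(T(n,3)), the number of triangles in the Turán graph T(n,3). -/
/-- A set of cliques `𝒞` is a triangle clique cover of `G` if every member of `𝒞` is a
clique of `G` and every triangle (3-clique) of `G` is contained in some member of `𝒞`. -/
def IsTriangleCliqueCover {V : Type*} (G : SimpleGraph V) (𝒞 : Finset (Finset V)) : Prop :=
  (∀ K ∈ 𝒞, G.IsClique (K : Set V)) ∧ ∀ T : Finset V, G.IsNClique 3 T → ∃ K ∈ 𝒞, T ⊆ K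

/-- The triangle clique cover number `θ_△(G)`: the minimum number of cliques needed to
cover all triangles of `G`. -/
noncomputable def triangleCliqueCoverNumber {V : Type*} (G : SimpleGraph V) : ℕ :=
  sInf {m : ℕ | ∃ 𝒞 : Finset (Finset V), IsTriangleCliqueCover G 𝒞 ∧ 𝒞.card = m}

/-- `k₃(T(n,3))`: the number of triangles (3-cliques) of the Turán graph `T(n,3)`. -/
def k3Turan (n : ℕ) : ℕ := ((SimpleGraph.turanGraph n 3).cliqueFinset 3).card


open Finset SimpleGraph

set_option maxHeartbeats 1600000

section AuxTriangleCover


def gT (n : ℕ) : ℕ := ((n+2)/3) * ((n+1)/3) * (n/3)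

lemma gT0 (s : ℕ) : gT (3*s) = s*s*s := by
  unfold gT
  rw [show (3*s+2)/3 = s from by omega, show (3*s+1)/3 = s from by omega,
    show (3*s)/3 = s from by omega]

lemma gT1 (s : ℕ) : gT (3*s+1) = (s+1)*s*s := by
  unfold gT
  rw [show (3*s+1+2)/3 = s+1 from by omega, show (3*s+1+1)/3 = s from by omega,
    show (3*s+1)/3 = s from by omega]

lemma gT2 (s : ℕ) : gT (3*s+2) = (s+1)*(s+1)*s := by
  unfold gT
  rw [show (3*s+2+2)/3 = s+1 from by omega, show (3*s+2+1)/3 = s+1 from by omega,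
    show (3*s+2)/3 = s from by omega]

lemma key3 (n' E : ℕ) (hE : 6*E ≤ 2*n'^2) : 1 + n' + E + gT n' ≤ gT (n' + 3) := by
  obtain ⟨s, r, hr, rfl⟩ : ∃ s r, r < 3 ∧ n' = 3*s + r := ⟨n'/3, n'%3, by omega, by omega⟩
  interval_cases r
  · rw [show 3*s+0 = 3*s from by ring, show 3*s+3 = 3*(s+1) from by ring, gT0, gT0]
    have hE' : E ≤ 3*s^2 := by nlinarith
    nlinarith
  · rw [show 3*s+1+3 = 3*(s+1)+1 from by ring, gT1, gT1]
    have hE' : E ≤ 3*s^2+2*s := by nlinarith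
    nlinarith
  · rw [show 3*s+2+3 = 3*(s+1)+2 from by ring, gT2, gT2]
    have hE' : E ≤ 3*s^2+4*s+1 := by nlinarith
    nlinarith

lemma key4 (q n' : ℕ) (hq : 4 ≤ q) :
    2*q*(1+n'+gT n') + (q-1)*n'^2 ≤ 2*q*gT (n'+q) := by
  obtain ⟨s, r, hr, rfl⟩ : ∃ s r, r < 3 ∧ n' = 3*s + r := ⟨n'/3, n'%3, by omega, by omega⟩
  obtain ⟨t, u, hu, rfl⟩ : ∃ t u, u < 3 ∧ q = 3*t + u := ⟨q/3, q%3, by omega, by omega⟩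
  interval_cases r <;> interval_cases u
  · obtain ⟨t', rfl⟩ : ∃ t'', t = t'' + 2 := ⟨t-2, by omega⟩
    rw [show (3*(t'+2)+0) - 1 = 3*t'+5 from by omega,
      show (3*s+0) + (3*(t'+2)+0) = 3*(s+t'+2) from by ring, gT0,
      show (3*s+0 : ℕ) = 3*s from by ring, gT0]
    nlinarith [Nat.zero_le (s*s), Nat.zero_le (s*t'), Nat.zero_le (t'*t'), Nat.zero_le s, Nat.zero_le t']
  · obtain ⟨t', rfl⟩ : ∃ t'', t = t'' + 1 := ⟨t-1, by omega⟩
    rw [show (3*(t'+1)+1) - 1 = 3*t'+3 from by omega,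
      show (3*s+0) + (3*(t'+1)+1) = 3*(s+t'+1)+1 from by ring, gT1,
      show (3*s+0 : ℕ) = 3*s from by ring, gT0]
    nlinarith [Nat.zero_le (s*s), Nat.zero_le (s*t'), Nat.zero_le (t'*t'), Nat.zero_le s, Nat.zero_le t']
  · obtain ⟨t', rfl⟩ : ∃ t'', t = t'' + 1 := ⟨t-1, by omega⟩
    rw [show (3*(t'+1)+2) - 1 = 3*t'+4 from by omega,
      show (3*s+0) + (3*(t'+1)+2) = 3*(s+t'+1)+2 from by ring, gT2,
      show (3*s+0 : ℕ) = 3*s from by ring, gT0]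
    nlinarith [Nat.zero_le (s*s), Nat.zero_le (s*t'), Nat.zero_le (t'*t'), Nat.zero_le s, Nat.zero_le t']
  · obtain ⟨t', rfl⟩ : ∃ t'', t = t'' + 2 := ⟨t-2, by omega⟩
    rw [show (3*(t'+2)+0) - 1 = 3*t'+5 from by omega,
      show (3*s+1) + (3*(t'+2)+0) = 3*(s+t'+2)+1 from by ring, gT1,
      show (3*s+1 : ℕ) = 3*s+1 from by ring, gT1]
    nlinarith [Nat.zero_le (s*s), Nat.zero_le (s*t'), Nat.zero_le (t'*t'), Nat.zero_le s, Nat.zero_le t']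
  · obtain ⟨t', rfl⟩ : ∃ t'', t = t'' + 1 := ⟨t-1, by omega⟩
    rw [show (3*(t'+1)+1) - 1 = 3*t'+3 from by omega,
      show (3*s+1) + (3*(t'+1)+1) = 3*(s+t'+1)+2 from by ring, gT2,
      show (3*s+1 : ℕ) = 3*s+1 from by ring, gT1]
    nlinarith [Nat.zero_le (s*s), Nat.zero_le (s*t'), Nat.zero_le (t'*t'), Nat.zero_le s, Nat.zero_le t']
  · obtain ⟨t', rfl⟩ : ∃ t'', t = t'' + 1 := ⟨t-1, by omega⟩
    rw [show (3*(t'+1)+2) - 1 = 3*t'+4 from by omega,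
      show (3*s+1) + (3*(t'+1)+2) = 3*(s+t'+2) from by ring, gT0,
      show (3*s+1 : ℕ) = 3*s+1 from by ring, gT1]
    nlinarith [Nat.zero_le (s*s), Nat.zero_le (s*t'), Nat.zero_le (t'*t'), Nat.zero_le s, Nat.zero_le t']
  · obtain ⟨t', rfl⟩ : ∃ t'', t = t'' + 2 := ⟨t-2, by omega⟩
    rw [show (3*(t'+2)+0) - 1 = 3*t'+5 from by omega,
      show (3*s+2) + (3*(t'+2)+0) = 3*(s+t'+2)+2 from by ring, gT2,
      show (3*s+2 : ℕ) = 3*s+2 from by ring, gT2]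
    nlinarith [Nat.zero_le (s*s), Nat.zero_le (s*t'), Nat.zero_le (t'*t'), Nat.zero_le s, Nat.zero_le t']
  · obtain ⟨t', rfl⟩ : ∃ t'', t = t'' + 1 := ⟨t-1, by omega⟩
    rw [show (3*(t'+1)+1) - 1 = 3*t'+3 from by omega,
      show (3*s+2) + (3*(t'+1)+1) = 3*(s+t'+2) from by ring, gT0,
      show (3*s+2 : ℕ) = 3*s+2 from by ring, gT2]
    nlinarith [Nat.zero_le (s*s), Nat.zero_le (s*t'), Nat.zero_le (t'*t'), Nat.zero_le s, Nat.zero_le t']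
  · obtain ⟨t', rfl⟩ : ∃ t'', t = t'' + 1 := ⟨t-1, by omega⟩
    rw [show (3*(t'+1)+2) - 1 = 3*t'+4 from by omega,
      show (3*s+2) + (3*(t'+1)+2) = 3*(s+t'+2)+1 from by ring, gT1,
      show (3*s+2 : ℕ) = 3*s+2 from by ring, gT2]
    nlinarith [Nat.zero_le (s*s), Nat.zero_le (s*t'), Nat.zero_le (t'*t'), Nat.zero_le s, Nat.zero_le t']


lemma key' (q n' E : ℕ) (hq : 3 ≤ q) (hE : 2*q*E ≤ (q-1)*n'^2) :
    1 + n' + E + gT n' ≤ gT (n' + q) := by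
  rcases eq_or_lt_of_le hq with heq | h4
  · subst heq
    exact key3 n' E (by linarith [hE])
  · have h := key4 q n' (by omega)
    have h2 : 2*q*(1+n'+E+gT n') ≤ 2*q*gT (n'+q) := by
      calc 2*q*(1+n'+E+gT n') = 2*q*(1+n'+gT n') + 2*q*E := by ring
        _ ≤ 2*q*(1+n'+gT n') + (q-1)*n'^2 := Nat.add_le_add_left hE _
        _ ≤ 2*q*gT (n'+q) := h
    exact Nat.le_of_mul_le_mul_left h2 (by omega)


lemma turan_edge_bound (n q : ℕ) (hq : 0 < q) :
    2*q*#(turanGraph n q).edgeFinset ≤ (q-1)*n^2 := by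
  classical
  set c : ℕ → ℕ := fun i => #(univ.filter fun v : Fin n => v.val % q = i) with hc
  have hdeg : ∀ v : Fin n, (turanGraph n q).degree v + c (v.val % q) = n := by
    intro v
    rw [← card_neighborFinset_eq_degree, neighborFinset_eq_filter]
    have := Finset.card_filter_add_card_filter_not
      (s := (univ : Finset (Fin n))) (p := fun w => (turanGraph n q).Adj v w)
    rw [Finset.card_univ, Fintype.card_fin] at this
    have h2 : c (v.val % q) = #(univ.filter fun a => ¬ (turanGraph n q).Adj v a) := by
      apply Finset.card_bij (fun w _ => w) <;>
        simp +contextual [turanGraph, eq_comm]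
    omega
  have hsum : 2 * #(turanGraph n q).edgeFinset + ∑ v : Fin n, c (v.val % q) = n^2 := by
    rw [← sum_degrees_eq_twice_card_edges, ← Finset.sum_add_distrib]
    simp only [hdeg]
    simp [sq, Finset.card_univ]
  have hfib : ∑ v : Fin n, c (v.val % q) = ∑ i ∈ range q, (c i)^2 := by
    rw [← Finset.sum_fiberwise_of_maps_to (g := fun v : Fin n => v.val % q)
      (t := range q) (fun v _ => by simp [Nat.mod_lt _ hq])]
    refine Finset.sum_congr rfl fun i _ => ?_
    rw [Finset.sum_congr rfl (fun v hv => by rw [(Finset.mem_filter.1 hv).2]),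
      Finset.sum_const, smul_eq_mul, sq]
  have hn : ∑ i ∈ range q, c i = n := by
    rw [← Fintype.card_fin n, ← Finset.card_univ]
    exact (Finset.card_eq_sum_card_fiberwise (fun v _ => by simp [Nat.mod_lt _ hq])).symm
  have hcs : n^2 ≤ q * ∑ i ∈ range q, (c i)^2 := by
    have := sq_sum_le_card_mul_sum_sq (s := range q) (f := fun i => (c i : ℤ))
    rw [Finset.card_range] at this
    have h2 : ((n:ℤ))^2 ≤ (q:ℤ) * ∑ i ∈ range q, ((c i : ℤ))^2 := by
      calc ((n:ℤ))^2 = (∑ i ∈ range q, (c i : ℤ))^2 := by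
            rw [← Nat.cast_sum, hn]
          _ ≤ _ := this
    exact_mod_cast h2
  have key : 2*q*#(turanGraph n q).edgeFinset + q * ∑ i ∈ range q, (c i)^2 = q * n^2 := by
    rw [← hfib, show 2*q*#(turanGraph n q).edgeFinset = q*(2*#(turanGraph n q).edgeFinset) from by
      ring, ← Nat.mul_add, hsum]
  have hrw : (q-1)*n^2 = q*n^2 - n^2 := by
    cases q with
    | zero => omega
    | succ m => simp [Nat.succ_sub_one, Nat.succ_mul]
  rw [hrw]
  apply Nat.le_sub_of_add_le
  linarith [key, hcs]




lemma range_mod_count (n i : ℕ) (hi : i < 3) :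
    #((range n).filter (· % 3 = i)) = (n + 2 - i)/3 := by
  induction n with
  | zero => simp; omega
  | succ m ih =>
    rw [Finset.range_add_one, Finset.filter_insert]
    by_cases h : m % 3 = i
    · rw [if_pos h, Finset.card_insert_of_notMem (by simp)]
      omega
    · rw [if_neg h]
      omega

lemma fin_mod_count (n i : ℕ) (hi : i < 3) :
    #(univ.filter fun v : Fin n => v.val % 3 = i) = (n + 2 - i)/3 := by
  rw [← range_mod_count n i hi]
  apply Finset.card_bij (fun v _ => v.val)
  · intro v hv; simp at hv; simp [hv]
  · intro a ha b hb hab; exact Fin.ext hab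
  · intro a ha
    simp only [Finset.mem_filter, Finset.mem_range] at ha
    refine ⟨⟨a, ha.1⟩, ?_, rfl⟩
    simp [ha.2]

lemma k3Turan_eq_gT (n : ℕ) : k3Turan n = gT n := by
  classical
  set A : ℕ → Finset (Fin n) := fun i => univ.filter fun v : Fin n => v.val % 3 = i with hA
  have hprod : #((A 0) ×ˢ ((A 1) ×ˢ (A 2))) = gT n := by
    rw [Finset.card_product, Finset.card_product, hA]
    simp only
    rw [fin_mod_count n 0 (by omega), fin_mod_count n 1 (by omega),
      fin_mod_count n 2 (by omega)]
    have e1 : (n + 2 - 0)/3 = (n+2)/3 := by omega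
    have e2 : (n + 2 - 1)/3 = (n+1)/3 := by omega
    have e3 : (n + 2 - 2)/3 = n/3 := by omega
    rw [e1, e2, e3]
    unfold gT
    rw [Nat.mul_assoc]
  rw [← hprod]
  unfold k3Turan
  refine (Finset.card_bij (fun p _ => ({p.1, p.2.1, p.2.2} : Finset (Fin n))) ?_ ?_ ?_).symm
  · -- maps to cliqueFinset
    rintro ⟨x, y, z⟩ hp
    simp only [Finset.mem_product, hA, Finset.mem_filter] at hp
    obtain ⟨⟨-, hx⟩, ⟨-, hy⟩, ⟨-, hz⟩⟩ := hp
    rw [SimpleGraph.mem_cliqueFinset_iff]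
    constructor
    · intro a ha b hb hab
      simp only [Finset.coe_insert, Set.mem_insert_iff, Finset.coe_singleton,
        Finset.mem_coe, Finset.mem_singleton, Finset.mem_insert] at ha hb
      simp only [turanGraph, ne_eq]
      rcases ha with rfl | rfl | rfl <;> rcases hb with rfl | rfl | rfl <;>
        first | (exact absurd rfl hab) | omega
    · rw [Finset.card_insert_of_notMem (by
          simp only [Finset.mem_insert, Finset.mem_singleton]
          rintro (rfl | rfl) <;> omega),
        Finset.card_insert_of_notMem (by
          simp only [Finset.mem_singleton]
          rintro rfl; omega),
        Finset.card_singleton]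
  · -- injective
    rintro ⟨x, y, z⟩ hp ⟨x', y', z'⟩ hp' heq
    simp only [Finset.mem_product, hA, Finset.mem_filter] at hp hp'
    obtain ⟨⟨-, hx⟩, ⟨-, hy⟩, ⟨-, hz⟩⟩ := hp
    obtain ⟨⟨-, hx'⟩, ⟨-, hy'⟩, ⟨-, hz'⟩⟩ := hp'
    have heq' : ({x, y, z} : Finset (Fin n)) = ({x', y', z'} : Finset (Fin n)) := heq
    have hmem : ∀ w : Fin n, w ∈ ({x, y, z} : Finset (Fin n)) ↔
        w ∈ ({x', y', z'} : Finset (Fin n)) := fun w => by rw [heq']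
    have e1 : x = x' := by
      have := (hmem x).1 (by simp)
      simp only [Finset.mem_insert, Finset.mem_singleton] at this
      rcases this with rfl | rfl | rfl <;> omega
    have e2 : y = y' := by
      have := (hmem y).1 (by simp)
      simp only [Finset.mem_insert, Finset.mem_singleton] at this
      rcases this with rfl | rfl | rfl <;> omega
    have e3 : z = z' := by
      have := (hmem z).1 (by simp)
      simp only [Finset.mem_insert, Finset.mem_singleton] at this
      rcases this with rfl | rfl | rfl <;> omega
    simp [e1, e2, e3]
  · -- surjective
    intro T hT
    rw [SimpleGraph.mem_cliqueFinset_iff] at hT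
    obtain ⟨x, y, z, hxy, hxz, hyz, rfl⟩ := Finset.card_eq_three.1 hT.2
    have hadj : ∀ a b : Fin n, a ∈ ({x,y,z} : Finset (Fin n)) →
        b ∈ ({x,y,z} : Finset (Fin n)) → a ≠ b → a.val % 3 ≠ b.val % 3 := by
      intro a b ha hb hab
      have := hT.1 (by simpa using ha) (by simpa using hb) hab
      simpa [turanGraph] using this
    have h1 : x.val % 3 ≠ y.val % 3 := hadj x y (by simp) (by simp) hxy
    have h2 : x.val % 3 ≠ z.val % 3 := hadj x z (by simp) (by simp) hxz
    have h3 : y.val % 3 ≠ z.val % 3 := hadj y z (by simp) (by simp) hyz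
    have hmx : x.val % 3 < 3 := Nat.mod_lt _ (by omega)
    have hmy : y.val % 3 < 3 := Nat.mod_lt _ (by omega)
    have hmz : z.val % 3 < 3 := Nat.mod_lt _ (by omega)
    have hset : ∀ a b c : Fin n, ({a, b, c} : Finset (Fin n)) = {x, y, z} →
        a.val % 3 = 0 → b.val % 3 = 1 → c.val % 3 = 2 →
        ∃ p, ∃ _ : p ∈ (A 0) ×ˢ ((A 1) ×ˢ (A 2)),
          ({p.1, p.2.1, p.2.2} : Finset (Fin n)) = {x, y, z} := by
      intro a b c h ha hb hc
      exact ⟨(a, b, c), by simp [hA, ha, hb, hc], h⟩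
    rcases show (x.val % 3 = 0 ∧ y.val % 3 = 1 ∧ z.val % 3 = 2) ∨
        (x.val % 3 = 0 ∧ z.val % 3 = 1 ∧ y.val % 3 = 2) ∨
        (y.val % 3 = 0 ∧ x.val % 3 = 1 ∧ z.val % 3 = 2) ∨
        (y.val % 3 = 0 ∧ z.val % 3 = 1 ∧ x.val % 3 = 2) ∨
        (z.val % 3 = 0 ∧ x.val % 3 = 1 ∧ y.val % 3 = 2) ∨
        (z.val % 3 = 0 ∧ y.val % 3 = 1 ∧ x.val % 3 = 2) from by omega with
      (⟨p1,p2,p3⟩|⟨p1,p2,p3⟩|⟨p1,p2,p3⟩|⟨p1,p2,p3⟩|⟨p1,p2,p3⟩|⟨p1,p2,p3⟩)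
    · exact hset x y z rfl p1 p2 p3
    · exact hset x z y (by ext w; simp only [Finset.mem_insert, Finset.mem_singleton]; tauto) p1 p2 p3
    · exact hset y x z (by ext w; simp only [Finset.mem_insert, Finset.mem_singleton]; tauto) p1 p2 p3
    · exact hset y z x (by ext w; simp only [Finset.mem_insert, Finset.mem_singleton]; tauto) p1 p2 p3
    · exact hset z x y (by ext w; simp only [Finset.mem_insert, Finset.mem_singleton]; tauto) p1 p2 p3
    · exact hset z y x (by ext w; simp only [Finset.mem_insert, Finset.mem_singleton]; tauto) p1 p2 p3


universe u


theorem cover_exists : ∀ (N : ℕ) (V : Type u) [Fintype V] (G : SimpleGraph V),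
    Fintype.card V = N → ∃ 𝒞 : Finset (Finset V), IsTriangleCliqueCover G 𝒞 ∧ 𝒞.card ≤ gT N := by
  intro N
  induction N using Nat.strong_induction_on with
  | _ N IH =>
    intro V _ G hcard
    classical
    by_cases hcf : G.CliqueFree 3
    · exact ⟨∅, ⟨by simp, fun T hT => absurd hT (hcf T)⟩, by simp⟩
    rw [CliqueFree] at hcf
    push_neg at hcf
    obtain ⟨T0, hT0⟩ := hcf
    -- maximum clique size
    set S : Finset ℕ := (range (N+1)).filter (fun k => ∃ K : Finset V, G.IsNClique k K) with hS
    have hS3 : 3 ∈ S := by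
      refine mem_filter.2 ⟨mem_range.2 ?_, ⟨T0, hT0⟩⟩
      have := Finset.card_le_univ T0
      rw [hT0.2, hcard] at this
      omega
    set q : ℕ := S.max' ⟨3, hS3⟩ with hqdef
    have hq3 : 3 ≤ q := Finset.le_max' S 3 hS3
    have hqmem := S.max'_mem ⟨3, hS3⟩
    have hqN : q ≤ N := by
      have := (mem_filter.1 hqmem).1
      rw [mem_range] at this
      omega
    obtain ⟨Q, hQ⟩ : ∃ K : Finset V, G.IsNClique q K := (mem_filter.1 hqmem).2
    have hfree : G.CliqueFree (q+1) := by
      intro K hK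
      have hmem : q+1 ∈ S := by
        refine mem_filter.2 ⟨mem_range.2 ?_, ⟨K, hK⟩⟩
        have := Finset.card_le_univ K
        rw [hK.2, hcard] at this
        omega
      have := Finset.le_max' S (q+1) hmem
      omega
    -- the induced graph on the complement of Q
    set s : Set V := ↑((Qᶜ : Finset V)) with hsdef
    have hcards : Fintype.card ↥s = N - q := by
      have h0 : Fintype.card ↥s = #(Qᶜ : Finset V) := Fintype.card_coe _
      rw [h0, Finset.card_compl, hQ.2, hcard]
    have hlt : N - q < N := by omega
    obtain ⟨𝒞', h𝒞', hc'⟩ := IH (N - q) hlt ↥s (G.induce s) hcards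
    -- Turán edge bound for the induced graph
    have hfree' : (G.induce s).CliqueFree (q+1) :=
      SimpleGraph.CliqueFree.comap ⟨(SimpleGraph.Embedding.induce s).toCopy⟩ hfree
    have hEbound : 2*q*#(G.induce s).edgeFinset ≤ (q-1)*(N-q)^2 := by
      obtain ⟨H, hdec, hH⟩ := exists_isTuranMaximal (V := ↥s) (r := q) (by omega)
      obtain ⟨iso⟩ := hH.nonempty_iso_turanGraph
      have h1 : #(G.induce s).edgeFinset ≤ #H.edgeFinset := hH.2 hfree'
      have h2 : #H.edgeFinset = #(turanGraph (Fintype.card ↥s) q).edgeFinset :=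
        iso.card_edgeFinset_eq
      have h3 := turan_edge_bound (N - q) q (by omega)
      rw [hcards] at h2
      calc 2*q*#(G.induce s).edgeFinset ≤ 2*q*#(turanGraph (N-q) q).edgeFinset := by
            apply Nat.mul_le_mul_left
            omega
        _ ≤ (q-1)*(N-q)^2 := h3
    -- the pieces of the cover
    set D : Sym2 ↥s → Finset V := Sym2.lift ⟨fun a b =>
        insert (a:V) (insert (b:V) (Q.filter fun y => G.Adj y a ∧ G.Adj y b)), by
      intro a b
      dsimp only
      have hfi : (Q.filter fun y => G.Adj y a ∧ G.Adj y b)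
          = (Q.filter fun y => G.Adj y b ∧ G.Adj y a) := by
        ext y
        simp only [Finset.mem_filter]
        tauto
      rw [Finset.insert_comm, hfi]⟩ with hDdef
    set 𝒞 : Finset (Finset V) :=
      ((𝒞'.image fun K => K.image Subtype.val) ∪ {Q}
        ∪ (Qᶜ.image fun w => insert w (Q.filter fun y => G.Adj w y)))
        ∪ ((G.induce s).edgeFinset.image D) with h𝒞def
    have hmemQc : ∀ v : V, v ∈ s ↔ v ∉ Q := by
      intro v
      rw [hsdef]
      simp
    refine ⟨𝒞, ⟨?_, ?_⟩, ?_⟩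
    · -- every member is a clique
      intro K hK
      rw [h𝒞def] at hK
      simp only [Finset.mem_union] at hK
      rcases hK with ((hK | hK) | hK) | hK
      · obtain ⟨K', hK', rfl⟩ := Finset.mem_image.1 hK
        intro a ha b hb hab
        simp only [Finset.coe_image, Set.mem_image, Finset.mem_coe] at ha hb
        obtain ⟨a', ha', rfl⟩ := ha
        obtain ⟨b', hb', rfl⟩ := hb
        have hne : a' ≠ b' := fun h => hab (by rw [h])
        have := h𝒞'.1 K' hK' ha' hb' hne
        simpa using this
      · rw [Finset.mem_singleton.1 hK]
        exact hQ.1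
      · obtain ⟨w, hw, rfl⟩ := Finset.mem_image.1 hK
        intro a ha b hb hab
        simp only [Finset.coe_insert, Set.mem_insert_iff, Finset.mem_coe,
          Finset.mem_filter] at ha hb
        rcases ha with rfl | ⟨haQ, haw⟩
        · rcases hb with rfl | ⟨hbQ, hbw⟩
          · exact absurd rfl hab
          · exact hbw
        · rcases hb with rfl | ⟨hbQ, hbw⟩
          · exact haw.symm
          · exact hQ.1 haQ hbQ hab
      · obtain ⟨e, he, rfl⟩ := Finset.mem_image.1 hK
        induction e using Sym2.ind with
        | _ x y =>
          have hadj : (G.induce s).Adj x y := by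
            rw [← SimpleGraph.mem_edgeSet, ← SimpleGraph.mem_edgeFinset]
            exact he
          have hxy : G.Adj (x:V) (y:V) := by simpa using hadj
          rw [hDdef]
          intro a ha b hb hab
          simp only [Sym2.lift_mk, Finset.coe_insert, Set.mem_insert_iff,
            Finset.mem_coe, Finset.mem_filter] at ha hb
          rcases ha with rfl | rfl | ⟨haQ, hax, hay⟩ <;>
            rcases hb with rfl | rfl | ⟨hbQ, hbx, hby⟩
          · exact absurd rfl hab
          · exact hxy
          · exact hbx.symm
          · exact hxy.symm
          · exact absurd rfl hab
          · exact hby.symm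
          · exact hax
          · exact hay
          · exact hQ.1 haQ hbQ hab
    · -- coverage
      intro T hT
      set Rout : Finset V := T.filter (fun v => v ∉ Q) with hRdef
      have hRsub : Rout ⊆ T := Finset.filter_subset _ _
      have hRcard : Rout.card ≤ 3 := by
        calc Rout.card ≤ T.card := Finset.card_le_card hRsub
          _ = 3 := hT.2
      have hadjT : ∀ a ∈ T, ∀ b ∈ T, a ≠ b → G.Adj a b := fun a ha b hb hab =>
        hT.1 ha hb hab
      interval_cases hR : Rout.card
      · -- T ⊆ Q
        refine ⟨Q, by rw [h𝒞def]; simp, ?_⟩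
        intro v hv
        by_contra hvQ
        have : v ∈ Rout := Finset.mem_filter.2 ⟨hv, hvQ⟩
        rw [Finset.card_eq_zero.1 hR] at this
        exact absurd this (Finset.notMem_empty v)
      · -- exactly one vertex outside Q
        obtain ⟨w, hw⟩ := Finset.card_eq_one.1 hR
        have hwmem : w ∈ Rout := by rw [hw]; exact Finset.mem_singleton_self w
        have hwT : w ∈ T := hRsub hwmem
        have hwQ : w ∉ Q := (Finset.mem_filter.1 hwmem).2
        refine ⟨insert w (Q.filter fun y => G.Adj w y), ?_, ?_⟩
        · rw [h𝒞def]
          simp only [Finset.mem_union]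
          refine Or.inl (Or.inr ?_)
          exact Finset.mem_image.2 ⟨w, Finset.mem_compl.2 hwQ, rfl⟩
        · intro v hv
          by_cases hvw : v = w
          · subst hvw; exact Finset.mem_insert_self _ _
          · have hvQ : v ∈ Q := by
              by_contra hvQ
              have : v ∈ Rout := Finset.mem_filter.2 ⟨hv, hvQ⟩
              rw [hw, Finset.mem_singleton] at this
              exact hvw this
            exact Finset.mem_insert_of_mem
              (Finset.mem_filter.2 ⟨hvQ, hadjT w hwT v hv (fun h => hvw h.symm)⟩)
      · -- exactly two vertices outside Q
        obtain ⟨w, x, hwx, hR2⟩ := Finset.card_eq_two.1 hR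
        have hwmem : w ∈ Rout := by rw [hR2]; simp
        have hxmem : x ∈ Rout := by rw [hR2]; simp
        have hwT : w ∈ T := hRsub hwmem
        have hxT : x ∈ T := hRsub hxmem
        have hwQ : w ∉ Q := (Finset.mem_filter.1 hwmem).2
        have hxQ : x ∉ Q := (Finset.mem_filter.1 hxmem).2
        have hws : w ∈ s := (hmemQc w).2 hwQ
        have hxs : x ∈ s := (hmemQc x).2 hxQ
        have hadjwx : G.Adj w x := hadjT w hwT x hxT hwx
        have hadj' : (G.induce s).Adj ⟨w, hws⟩ ⟨x, hxs⟩ := by simpa using hadjwx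
        refine ⟨D s(⟨w, hws⟩, ⟨x, hxs⟩), ?_, ?_⟩
        · rw [h𝒞def]
          simp only [Finset.mem_union]
          refine Or.inr ?_
          exact Finset.mem_image.2 ⟨s(⟨w, hws⟩, ⟨x, hxs⟩),
            SimpleGraph.mem_edgeFinset.2 hadj', rfl⟩
        · intro v hv
          rw [hDdef]
          simp only [Sym2.lift_mk, Finset.mem_insert, Finset.mem_filter]
          by_cases hvw : v = w
          · exact Or.inl hvw
          by_cases hvx : v = x
          · exact Or.inr (Or.inl hvx)
          have hvQ : v ∈ Q := by
            by_contra hvQ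
            have : v ∈ Rout := Finset.mem_filter.2 ⟨hv, hvQ⟩
            rw [hR2] at this
            simp only [Finset.mem_insert, Finset.mem_singleton] at this
            tauto
          exact Or.inr (Or.inr ⟨hvQ, hadjT v hv w hwT hvw, hadjT v hv x hxT hvx⟩)
      · -- all three vertices outside Q
        have hRT : Rout = T := Finset.eq_of_subset_of_card_le hRsub (by rw [hR, hT.2])
        have hallout : ∀ v ∈ T, v ∈ s := by
          intro v hv
          rw [hmemQc]
          have : v ∈ Rout := by rw [hRT]; exact hv
          exact (Finset.mem_filter.1 this).2
        set T' : Finset ↥s := T.subtype (fun v => v ∈ s) with hT'def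
        have hT'clique : (G.induce s).IsNClique 3 T' := by
          constructor
          · intro a ha b hb hab
            simp only [hT'def, Finset.mem_coe, Finset.mem_subtype] at ha hb
            have hne : (a:V) ≠ (b:V) := fun h => hab (Subtype.ext h)
            have := hadjT a ha b hb hne
            simpa using this
          · rw [hT'def, Finset.card_subtype]
            rw [Finset.filter_true_of_mem hallout]
            exact hT.2
        obtain ⟨K', hK'mem, hK'sub⟩ := h𝒞'.2 T' hT'clique
        refine ⟨K'.image Subtype.val, ?_, ?_⟩
        · rw [h𝒞def]
          simp only [Finset.mem_union]
          exact Or.inl (Or.inl (Or.inl (Finset.mem_image.2 ⟨K', hK'mem, rfl⟩)))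
        · intro v hv
          have : (⟨v, hallout v hv⟩ : ↥s) ∈ T' := by
            rw [hT'def, Finset.mem_subtype]
            exact hv
          exact Finset.mem_image.2 ⟨⟨v, hallout v hv⟩, hK'sub this, rfl⟩
    · -- cardinality bound
      have hcQ : #(Qᶜ : Finset V) = N - q := by
        rw [Finset.card_compl, hQ.2, hcard]
      have h1 : 𝒞.card ≤ 𝒞'.card + 1 + (N - q) + #(G.induce s).edgeFinset := by
        rw [h𝒞def]
        calc #(((𝒞'.image fun K => K.image Subtype.val) ∪ {Q}
              ∪ (Qᶜ.image fun w => insert w (Q.filter fun y => G.Adj w y)))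
              ∪ ((G.induce s).edgeFinset.image D))
            ≤ #(((𝒞'.image fun K => K.image Subtype.val) ∪ {Q})
              ∪ (Qᶜ.image fun w => insert w (Q.filter fun y => G.Adj w y)))
              + #((G.induce s).edgeFinset.image D) := Finset.card_union_le _ _
          _ ≤ (#((𝒞'.image fun K => K.image Subtype.val) ∪ {Q})
              + #(Qᶜ.image fun w => insert w (Q.filter fun y => G.Adj w y)))
              + #((G.induce s).edgeFinset.image D) := by
                gcongr
                exact Finset.card_union_le _ _
          _ ≤ ((#(𝒞'.image fun K => K.image Subtype.val) + 1)
              + #(Qᶜ.image fun w => insert w (Q.filter fun y => G.Adj w y)))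
              + #((G.induce s).edgeFinset.image D) := by
                gcongr
                exact Finset.card_union_le _ _
          _ ≤ ((𝒞'.card + 1) + #(Qᶜ : Finset V)) + #(G.induce s).edgeFinset := by
                gcongr <;> exact Finset.card_image_le
          _ = 𝒞'.card + 1 + (N - q) + #(G.induce s).edgeFinset := by rw [hcQ]
      have hkey := key' q (N - q) (#(G.induce s).edgeFinset) hq3 hEbound
      rw [Nat.sub_add_cancel hqN] at hkey
      omega


end AuxTriangleCover

/-- For every graph `G` on `n` vertices, `θ_△(G) ≤ k₃(T(n,3))`. -/
theorem triangleCliqueCoverNumber_le {V : Type*} [Fintype V] (G : SimpleGraph V) :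
    triangleCliqueCoverNumber G ≤ k3Turan (Fintype.card V) := by
  obtain ⟨𝒞, hcov, hcard⟩ := cover_exists (Fintype.card V) V G rfl
  calc triangleCliqueCoverNumber G ≤ 𝒞.card := Nat.sInf_le ⟨𝒞, hcov, rfl⟩
    _ ≤ gT (Fintype.card V) := hcard
    _ = k3Turan (Fintype.card V) := (k3Turan_eq_gT _).symm
end

section
/- Let t ≥ 2, let G be a graph on n vertices, let e be the number of t-cliques of G, let s = 1 + e, and let G' be the graph obtained from G by adding s new pairwise nonadjacent vertices u_1, …, u_s, each adjacent to all vertices of G. Then for every integer k ≥ 1, θ_{K_{t−1}}(G) ≤ k if and only if θ_{K_t}(G') ≤ s·k + e. -/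
/-- A set of cliques `𝒞` is a `K_t` clique cover of `G` if every member of `𝒞` is a
clique of `G` and every `t`-clique of `G` is contained in some member of `𝒞`. -/
def IsKtCliqueCover {V : Type*} (G : SimpleGraph V) (t : ℕ) (𝒞 : Finset (Finset V)) :
    Prop :=
  (∀ K ∈ 𝒞, G.IsClique (K : Set V)) ∧ ∀ k : Finset V, G.IsNClique t k → ∃ K ∈ 𝒞, k ⊆ K

/-- The `K_t` clique cover number `θ_{K_t}(G)`. -/
noncomputable def ktCliqueCoverNumber {V : Type*} (G : SimpleGraph V) (t : ℕ) : ℕ :=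
  sInf {m : ℕ | ∃ 𝒞 : Finset (Finset V), IsKtCliqueCover G t 𝒞 ∧ 𝒞.card = m}

/-- The graph `G'` obtained from `G` by adding `s` new pairwise nonadjacent vertices,
each adjacent to all vertices of `G`. -/
def joinIndepVerts {V : Type*} (G : SimpleGraph V) (s : ℕ) : SimpleGraph (V ⊕ Fin s) where
  Adj x y :=
    match x, y with
    | Sum.inl a, Sum.inl b => G.Adj a b
    | Sum.inl _, Sum.inr _ => True
    | Sum.inr _, Sum.inl _ => True
    | Sum.inr _, Sum.inr _ => False
  symm := by
    constructor
    rintro (a | a) (b | b) h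
    · exact h.symm
    · trivial
    · trivial
    · exact h
  loopless := by
    constructor
    rintro (a | a) h
    · exact G.loopless.irrefl a h
    · exact h

lemma ktCliqueCoverNumber_le_iff {V : Type*} [Fintype V] (G : SimpleGraph V) (t k : ℕ) :
    ktCliqueCoverNumber G t ≤ k ↔
      ∃ 𝒞 : Finset (Finset V), IsKtCliqueCover G t 𝒞 ∧ 𝒞.card ≤ k := by
  classical
  constructor
  · intro h
    have hne : {m : ℕ | ∃ 𝒞 : Finset (Finset V),
        IsKtCliqueCover G t 𝒞 ∧ 𝒞.card = m}.Nonempty := by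
      refine ⟨_, Finset.univ.filter (fun K => G.IsNClique t K), ⟨?_, ?_⟩, rfl⟩
      · intro K hK
        exact ((Finset.mem_filter.mp hK).2).isClique
      · intro c hc
        exact ⟨c, Finset.mem_filter.mpr ⟨Finset.mem_univ _, hc⟩, subset_rfl⟩
    obtain ⟨𝒞, h𝒞, hcard⟩ := Nat.sInf_mem hne
    exact ⟨𝒞, h𝒞, hcard ▸ h⟩
  · rintro ⟨𝒞, h𝒞, hcard⟩
    exact le_trans (Nat.sInf_le ⟨𝒞, h𝒞, rfl⟩) hcard

set_option maxHeartbeats 1000000 in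
/-- Let `t ≥ 2`, let `G` be a graph, let `e` be the number of `t`-cliques of `G`, let
`s = 1 + e`, and let `G'` be obtained from `G` by adding `s` new pairwise nonadjacent
vertices each adjacent to all of `G`. Then for every `k ≥ 1`,
`θ_{K_{t−1}}(G) ≤ k` if and only if `θ_{K_t}(G') ≤ s·k + e`. -/
theorem ktCliqueCoverNumber_join_iff {V : Type*} [Fintype V] [DecidableEq V]
    (G : SimpleGraph V) [DecidableRel G.Adj] (t : ℕ) (ht : 2 ≤ t) (e s : ℕ)
    (he : e = (G.cliqueFinset t).card) (hs : s = 1 + e) (k : ℕ) (hk : 1 ≤ k) :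
    ktCliqueCoverNumber G (t - 1) ≤ k ↔
      ktCliqueCoverNumber (joinIndepVerts G s) t ≤ s * k + e := by
  classical
  rw [ktCliqueCoverNumber_le_iff, ktCliqueCoverNumber_le_iff]
  constructor
  · rintro ⟨𝒞, ⟨h𝒞cl, h𝒞cov⟩, h𝒞card⟩
    refine ⟨((𝒞 ×ˢ (Finset.univ : Finset (Fin s))).image
        (fun p : Finset V × Fin s => insert (Sum.inr p.2) (p.1.image Sum.inl))) ∪
        ((G.cliqueFinset t).image (fun K : Finset V => (K.image Sum.inl : Finset (V ⊕ Fin s)))), ⟨?_, ?_⟩, ?_⟩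
    · -- all members are cliques of G'
      intro K hK
      rcases Finset.mem_union.mp hK with hK | hK
      · obtain ⟨⟨C, i⟩, hCi, rfl⟩ := Finset.mem_image.mp hK
        have hC : G.IsClique (C : Set V) := h𝒞cl C (Finset.mem_product.mp hCi).1
        intro x hx y hy hxy
        simp only [Finset.coe_insert, Set.mem_insert_iff, Finset.coe_image,
          Set.mem_image, Finset.mem_coe] at hx hy
        rcases hx with rfl | ⟨a, ha, rfl⟩ <;> rcases hy with rfl | ⟨b, hb, rfl⟩
        · exact absurd rfl hxy
        · trivial
        · trivial
        · exact hC ha hb (fun hab => hxy (by rw [hab]))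
      · obtain ⟨C, hC, rfl⟩ := Finset.mem_image.mp hK
        have hC' : G.IsClique (C : Set V) := (SimpleGraph.mem_cliqueFinset_iff.mp hC).isClique
        intro x hx y hy hxy
        simp only [Finset.coe_image, Set.mem_image, Finset.mem_coe] at hx hy
        obtain ⟨a, ha, rfl⟩ := hx
        obtain ⟨b, hb, rfl⟩ := hy
        exact hC' ha hb (fun hab => hxy (by rw [hab]))
    · -- covering property
      intro c hc
      set K : Finset V := c.preimage Sum.inl Sum.inl_injective.injOn with hKdef
      set B : Finset (V ⊕ Fin s) := c.filter (fun x => x.isRight) with hBdef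
      have hsplit : c = K.image Sum.inl ∪ B := by
        ext x
        cases x with
        | inl a =>
          simp [hKdef, hBdef, Finset.mem_preimage]
        | inr j =>
          simp [hKdef, hBdef]
      have hdisj : Disjoint (K.image Sum.inl) B := by
        rw [Finset.disjoint_left]
        rintro x hx hxB
        obtain ⟨a, _, rfl⟩ := Finset.mem_image.mp hx
        simp [hBdef] at hxB
      have hcard : K.card + B.card = t := by
        rw [← hc.2, hsplit, Finset.card_union_of_disjoint hdisj,
          Finset.card_image_of_injective _ Sum.inl_injective]
      have hKcl : G.IsClique (K : Set V) := by
        intro a ha b hb hab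
        have ha' : Sum.inl a ∈ (c : Set (V ⊕ Fin s)) := by
          simp only [Finset.mem_coe]
          exact Finset.mem_preimage.mp (Finset.mem_coe.mp ha)
        have hb' : Sum.inl b ∈ (c : Set (V ⊕ Fin s)) := by
          simp only [Finset.mem_coe]
          exact Finset.mem_preimage.mp (Finset.mem_coe.mp hb)
        exact hc.1 ha' hb' (fun h => hab (Sum.inl_injective h))
      have hB1 : B.card ≤ 1 := by
        rw [Finset.card_le_one]
        intro x hx y hy
        have hxc : x ∈ c := Finset.mem_of_mem_filter _ hx
        have hyc : y ∈ c := Finset.mem_of_mem_filter _ hy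
        obtain ⟨i, rfl⟩ := Sum.isRight_iff.mp (Finset.mem_filter.mp hx).2
        obtain ⟨j, rfl⟩ := Sum.isRight_iff.mp (Finset.mem_filter.mp hy).2
        by_contra hne
        exact hc.1 hxc hyc hne
      rcases Nat.le_one_iff_eq_zero_or_eq_one.mp hB1 with hB | hB
      · -- no new vertex: c is a t-clique of G
        have hBempty : B = ∅ := Finset.card_eq_zero.mp hB
        have hKt : G.IsNClique t K := ⟨hKcl, by omega⟩
        refine ⟨K.image Sum.inl, Finset.mem_union.mpr (Or.inr ?_), ?_⟩
        · exact Finset.mem_image.mpr ⟨K, SimpleGraph.mem_cliqueFinset_iff.mpr hKt, rfl⟩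
        · rw [hsplit, hBempty, Finset.union_empty]
      · -- one new vertex
        obtain ⟨b, hBb⟩ := Finset.card_eq_one.mp hB
        have hbB : b ∈ B := hBb ▸ Finset.mem_singleton_self b
        obtain ⟨i, rfl⟩ := Sum.isRight_iff.mp (Finset.mem_filter.mp hbB).2
        have hKt1 : G.IsNClique (t - 1) K := ⟨hKcl, by omega⟩
        obtain ⟨C, hC𝒞, hKC⟩ := h𝒞cov K hKt1
        refine ⟨insert (Sum.inr i) (C.image Sum.inl), Finset.mem_union.mpr (Or.inl ?_), ?_⟩
        · exact Finset.mem_image.mpr ⟨(C, i),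
            Finset.mem_product.mpr ⟨hC𝒞, Finset.mem_univ _⟩, rfl⟩
        · rw [hsplit, hBb]
          intro x hx
          rcases Finset.mem_union.mp hx with hx | hx
          · obtain ⟨a, ha, rfl⟩ := Finset.mem_image.mp hx
            exact Finset.mem_insert_of_mem (Finset.mem_image.mpr ⟨a, hKC ha, rfl⟩)
          · rw [Finset.mem_singleton.mp hx]
            exact Finset.mem_insert_self _ _
    · -- cardinality bound
      calc _ ≤ ((𝒞 ×ˢ (Finset.univ : Finset (Fin s))).image
            (fun p : Finset V × Fin s => insert (Sum.inr p.2) (p.1.image Sum.inl))).card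
            + ((G.cliqueFinset t).image (fun K : Finset V => (K.image Sum.inl : Finset (V ⊕ Fin s)))).card :=
          Finset.card_union_le _ _
        _ ≤ (𝒞 ×ˢ (Finset.univ : Finset (Fin s))).card + (G.cliqueFinset t).card :=
          Nat.add_le_add (Finset.card_image_le) (Finset.card_image_le)
        _ = 𝒞.card * s + e := by
          rw [Finset.card_product, Finset.card_univ, Fintype.card_fin, he]
        _ ≤ s * k + e := by
          have h1 : 𝒞.card * s ≤ s * k := by
            rw [mul_comm]
            exact Nat.mul_le_mul_left s h𝒞card
          exact Nat.add_le_add_right h1 e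
  · rintro ⟨𝒟, ⟨h𝒟cl, h𝒟cov⟩, h𝒟card⟩
    have hspos : 0 < s := by omega
    -- find an index i with few cliques containing inr i
    have hex : ∃ i : Fin s, (𝒟.filter (fun K => Sum.inr i ∈ K)).card ≤ k := by
      by_contra hcon
      push_neg at hcon
      have hdisj : ∀ x ∈ (Finset.univ : Finset (Fin s)), ∀ y ∈ (Finset.univ : Finset (Fin s)),
          x ≠ y → Disjoint (𝒟.filter (fun K => Sum.inr x ∈ K))
            (𝒟.filter (fun K => Sum.inr y ∈ K)) := by
        intro x _ y _ hxy
        rw [Finset.disjoint_left]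
        intro K hKx hKy
        have hK𝒟 := (Finset.mem_filter.mp hKx).1
        exact h𝒟cl K hK𝒟 (Finset.mem_coe.mpr (Finset.mem_filter.mp hKx).2)
          (Finset.mem_coe.mpr (Finset.mem_filter.mp hKy).2)
          (fun h => hxy (Sum.inr_injective h))
      have hsum : ∑ i : Fin s, (𝒟.filter (fun K => Sum.inr i ∈ K)).card ≤ 𝒟.card := by
        rw [← Finset.card_biUnion hdisj]
        exact Finset.card_le_card (Finset.biUnion_subset.mpr
          (fun i _ => Finset.filter_subset _ _))
      have hlow : s * (k + 1) ≤ ∑ i : Fin s, (𝒟.filter (fun K => Sum.inr i ∈ K)).card := by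
        calc s * (k + 1) = ∑ _i : Fin s, (k + 1) := by
              rw [Finset.sum_const, Finset.card_univ, Fintype.card_fin, smul_eq_mul]
          _ ≤ _ := Finset.sum_le_sum (fun i _ => hcon i)
      have h1 : s * (k + 1) = s * k + s := by ring
      have h2 : s * k + s ≤ s * k + e := by
        calc s * k + s = s * (k + 1) := h1.symm
          _ ≤ 𝒟.card := le_trans hlow hsum
          _ ≤ s * k + e := h𝒟card
      have := Nat.le_of_add_le_add_left h2
      omega
    obtain ⟨i, hi⟩ := hex
    refine ⟨(𝒟.filter (fun K => Sum.inr i ∈ K)).image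
        (fun K => K.preimage Sum.inl Sum.inl_injective.injOn), ⟨?_, ?_⟩, ?_⟩
    · intro L hL
      obtain ⟨K, hK, rfl⟩ := Finset.mem_image.mp hL
      have hK𝒟 := (Finset.mem_filter.mp hK).1
      intro a ha b hb hab
      have ha' : Sum.inl a ∈ (K : Set (V ⊕ Fin s)) := by
        simp only [Finset.mem_coe]
        exact Finset.mem_preimage.mp (Finset.mem_coe.mp ha)
      have hb' : Sum.inl b ∈ (K : Set (V ⊕ Fin s)) := by
        simp only [Finset.mem_coe]
        exact Finset.mem_preimage.mp (Finset.mem_coe.mp hb)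
      exact h𝒟cl K hK𝒟 ha' hb' (fun h => hab (Sum.inl_injective h))
    · intro C hC
      have hinr : Sum.inr i ∉ C.image Sum.inl := by simp
      have hcl' : (joinIndepVerts G s).IsClique
          ((insert (Sum.inr i) (C.image Sum.inl) : Finset (V ⊕ Fin s)) : Set (V ⊕ Fin s)) := by
        intro x hx y hy hxy
        simp only [Finset.coe_insert, Set.mem_insert_iff, Finset.coe_image,
          Set.mem_image, Finset.mem_coe] at hx hy
        rcases hx with rfl | ⟨a, ha, rfl⟩ <;> rcases hy with rfl | ⟨b, hb, rfl⟩
        · exact absurd rfl hxy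
        · trivial
        · trivial
        · exact hC.1 ha hb (fun hab => hxy (by rw [hab]))
      have hcard' : (insert (Sum.inr i) (C.image Sum.inl) : Finset (V ⊕ Fin s)).card = t := by
        rw [Finset.card_insert_of_notMem hinr,
          Finset.card_image_of_injective _ Sum.inl_injective, hC.2]
        omega
      obtain ⟨K, hK𝒟, hsub⟩ := h𝒟cov _ ⟨hcl', hcard'⟩
      have hiK : Sum.inr i ∈ K := hsub (Finset.mem_insert_self _ _)
      refine ⟨K.preimage Sum.inl Sum.inl_injective.injOn,
        Finset.mem_image.mpr ⟨K, Finset.mem_filter.mpr ⟨hK𝒟, hiK⟩, rfl⟩, ?_⟩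
      intro a ha
      rw [Finset.mem_preimage]
      exact hsub (Finset.mem_insert_of_mem (Finset.mem_image.mpr ⟨a, ha, rfl⟩))
    · exact le_trans Finset.card_image_le hi
end

section
/- (Lovász) Let G be a graph on n vertices, let k = C(n,2) − |E(G)| be the number of non-edges of G, and let t be the greatest integer such that t² − t ≤ k. Then the edge clique cover number satisfies θ_e(G) ≤ k + t. -/
private lemma exists_greedy_coloring {V : Type*} [DecidableEq V] (H : SimpleGraph V)
    (s : Finset V) :
    ∃ col : V → ℕ,
      (∀ v ∈ s, ∀ u ∈ s, H.Adj u v → col u ≠ col v) ∧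
      (∀ v ∈ s, ∀ c, c < col v → ∃ u ∈ s, H.Adj u v ∧ col u = c) := by
  classical
  induction s using Finset.induction_on with
  | empty => exact ⟨fun _ => 0, by simp, by simp⟩
  | @insert a s ha ih =>
      obtain ⟨col, hp, hg⟩ := ih
      have hne : {c : ℕ | ∀ u ∈ s, H.Adj u a → col u ≠ c}.Nonempty := by
        refine ⟨(s.image col).sup id + 1, fun u hu _ => ?_⟩
        have h1 : col u ≤ (s.image col).sup id :=
          Finset.le_sup (f := id) (Finset.mem_image_of_mem col hu)
        omega
      have hmem := Nat.sInf_mem hne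
      set c₀ := sInf {c : ℕ | ∀ u ∈ s, H.Adj u a → col u ≠ c} with hc₀
      refine ⟨Function.update col a c₀, ?_, ?_⟩
      · intro v hv u hu hadj
        rcases Finset.mem_insert.mp hv with hva | hv
        · rcases Finset.mem_insert.mp hu with hua | hu
          · rw [hva] at hadj; rw [hua] at hadj
            exact absurd hadj (H.loopless.irrefl a)
          · rw [hva, Function.update_self, Function.update_of_ne (ne_of_mem_of_not_mem hu ha)]
            rw [hva] at hadj
            exact hmem u hu hadj
        · rcases Finset.mem_insert.mp hu with hua | hu
          · rw [hua, Function.update_self, Function.update_of_ne (ne_of_mem_of_not_mem hv ha)]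
            rw [hua] at hadj
            exact (hmem v hv hadj.symm).symm
          · rw [Function.update_of_ne (ne_of_mem_of_not_mem hu ha),
               Function.update_of_ne (ne_of_mem_of_not_mem hv ha)]
            exact hp v hv u hu hadj
      · intro v hv c hc
        rcases Finset.mem_insert.mp hv with hva | hv
        · rw [hva, Function.update_self] at hc
          have hnotmem : c ∉ {c : ℕ | ∀ u ∈ s, H.Adj u a → col u ≠ c} :=
            Nat.notMem_of_lt_sInf hc
          simp only [Set.mem_setOf_eq] at hnotmem
          push_neg at hnotmem
          obtain ⟨u, hu, hadj, hcol⟩ := hnotmem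
          refine ⟨u, Finset.mem_insert_of_mem hu, by rw [hva]; exact hadj, ?_⟩
          rw [Function.update_of_ne (ne_of_mem_of_not_mem hu ha)]
          exact hcol
        · rw [Function.update_of_ne (ne_of_mem_of_not_mem hv ha)] at hc
          obtain ⟨u, hu, hadj, hcol⟩ := hg v hv c hc
          refine ⟨u, Finset.mem_insert_of_mem hu, hadj, ?_⟩
          rw [Function.update_of_ne (ne_of_mem_of_not_mem hu ha)]
          exact hcol

/-- (Lovász) Let `G` be a graph on `n` vertices, let `k = C(n,2) − |E(G)|` be the number
of non-edges of `G`, and let `t` be the greatest integer such that `t² − t ≤ k`. Then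
`θ_e(G) ≤ k + t`. -/
theorem edgeCliqueCoverNumber_le_lovasz {V : Type*} [Fintype V] [DecidableEq V]
    (G : SimpleGraph V) [DecidableRel G.Adj] (k t : ℕ)
    (hk : k = Nat.choose (Fintype.card V) 2 - G.edgeFinset.card)
    (ht : t * t - t ≤ k) (htmax : ∀ u : ℕ, u * u - u ≤ k → u ≤ t) :
    edgeCliqueCoverNumber G ≤ k + t := by
  classical
  -- the number of complement edges is at most k
  have hkc : Gᶜ.edgeFinset.card ≤ k := by
    have hsub : G.edgeFinset ⊆ (⊤ : SimpleGraph V).edgeFinset :=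
      SimpleGraph.edgeFinset_mono le_top
    have hsubc : Gᶜ.edgeFinset ⊆ (⊤ : SimpleGraph V).edgeFinset \ G.edgeFinset := by
      intro e he
      rw [Finset.mem_sdiff]
      refine ⟨SimpleGraph.edgeFinset_mono le_top he, ?_⟩
      intro heG
      rw [SimpleGraph.mem_edgeFinset] at he heG
      have key : ∀ a b : V, s(a, b) ∈ Gᶜ.edgeSet → s(a, b) ∈ G.edgeSet → False := by
        intro a b h1 h2
        rw [SimpleGraph.mem_edgeSet] at h1 h2
        rw [SimpleGraph.compl_adj] at h1
        exact h1.2 h2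
      exact Sym2.ind (f := fun e => e ∈ Gᶜ.edgeSet → e ∈ G.edgeSet → False) key e he heG
    calc Gᶜ.edgeFinset.card
        ≤ ((⊤ : SimpleGraph V).edgeFinset \ G.edgeFinset).card := Finset.card_le_card hsubc
      _ = (⊤ : SimpleGraph V).edgeFinset.card - G.edgeFinset.card := Finset.card_sdiff_of_subset hsub
      _ = Nat.choose (Fintype.card V) 2 - G.edgeFinset.card := by
          rw [SimpleGraph.card_edgeFinset_top_eq_card_choose_two]
      _ = k := hk.symm
  -- greedy coloring of the complement
  obtain ⟨col, hp, hg⟩ := exists_greedy_coloring Gᶜ (Finset.univ : Finset V)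
  have hp' : ∀ u v : V, Gᶜ.Adj u v → col u ≠ col v := fun u v h =>
    hp v (Finset.mem_univ v) u (Finset.mem_univ u) h
  have hg' : ∀ v : V, ∀ c, c < col v → ∃ u, Gᶜ.Adj u v ∧ col u = c := by
    intro v c hc
    obtain ⟨u, _, h1, h2⟩ := hg v (Finset.mem_univ v) c hc
    exact ⟨u, h1, h2⟩
  -- color classes
  set cls : ℕ → Finset V := fun c => Finset.univ.filter (fun v => col v = c) with hclsdef
  have hmemcls : ∀ (v : V) (c : ℕ), v ∈ cls c ↔ col v = c := by
    intro v c; simp [hclsdef]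
  -- witness function
  have hwex : ∀ (v : V) (c : ℕ), ∃ u : V, c < col v → (Gᶜ.Adj u v ∧ col u = c) := by
    intro v c
    by_cases h : c < col v
    · obtain ⟨u, h1, h2⟩ := hg' v c h; exact ⟨u, fun _ => ⟨h1, h2⟩⟩
    · exact ⟨v, fun h' => absurd h' h⟩
  choose wit hwit using hwex
  set S : Finset ((_ : V) × ℕ) := Finset.univ.sigma (fun v => Finset.range (col v)) with hSdef
  set pay : V → ℕ → Finset V :=
    fun v c => insert v ((cls c).filter (fun u => ¬ Gᶜ.Adj u v)) with hpaydef
  set T : Finset ℕ := (Finset.univ.image col).filter (fun c => 1 < (cls c).card) with hTdef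
  set 𝒞 : Finset (Finset V) := T.image cls ∪ S.image (fun p => pay p.1 p.2) with h𝒞def
  -- it is a cover
  have hcover : IsEdgeCliqueCover G 𝒞 := by
    constructor
    · intro K hK
      rw [h𝒞def, Finset.mem_union] at hK
      rcases hK with hK | hK
      · obtain ⟨c, _, rfl⟩ := Finset.mem_image.mp hK
        intro x hx y hy hxy
        have hx' : col x = c := (hmemcls x c).mp (Finset.mem_coe.mp hx)
        have hy' : col y = c := (hmemcls y c).mp (Finset.mem_coe.mp hy)
        by_contra hadj
        exact hp' x y ((SimpleGraph.compl_adj G x y).mpr ⟨hxy, hadj⟩) (hx'.trans hy'.symm)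
      · obtain ⟨p, _, rfl⟩ := Finset.mem_image.mp hK
        intro x hx y hy hxy
        have hx' : x ∈ pay p.1 p.2 := Finset.mem_coe.mp hx
        have hy' : y ∈ pay p.1 p.2 := Finset.mem_coe.mp hy
        rw [hpaydef] at hx' hy'
        rcases Finset.mem_insert.mp hx' with hx1 | hx2
        · rcases Finset.mem_insert.mp hy' with hy1 | hy2
          · exact absurd (hx1.trans hy1.symm) hxy
          · have h2 := (Finset.mem_filter.mp hy2).2
            rw [SimpleGraph.compl_adj] at h2
            push_neg at h2
            have := h2 (by rw [hx1] at hxy; exact (Ne.symm hxy))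
            rw [hx1]; exact this.symm
        · rcases Finset.mem_insert.mp hy' with hy1 | hy2
          · have h2 := (Finset.mem_filter.mp hx2).2
            rw [SimpleGraph.compl_adj] at h2
            push_neg at h2
            have := h2 (by rw [hy1] at hxy; exact hxy)
            rw [hy1]; exact this
          · have hcx : col x = p.2 := (hmemcls _ _).mp (Finset.mem_filter.mp hx2).1
            have hcy : col y = p.2 := (hmemcls _ _).mp (Finset.mem_filter.mp hy2).1
            by_contra hadj
            exact hp' x y ((SimpleGraph.compl_adj G x y).mpr ⟨hxy, hadj⟩) (hcx.trans hcy.symm)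
    · intro u v huv
      have hne := G.ne_of_adj huv
      have hmempay : ∀ x y : V, G.Adj x y → col x < col y → x ∈ pay y (col x) ∧ y ∈ pay y (col x) := by
        intro x y hxy hlt
        constructor
        · rw [hpaydef]
          refine Finset.mem_insert_of_mem (Finset.mem_filter.mpr ⟨(hmemcls x _).mpr rfl, ?_⟩)
          rw [SimpleGraph.compl_adj]
          push_neg
          intro _
          exact hxy
        · rw [hpaydef]; exact Finset.mem_insert_self _ _
      have hpayin : ∀ x y : V, col x < col y → pay y (col x) ∈ 𝒞 := by
        intro x y hlt
        rw [h𝒞def, Finset.mem_union]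
        right
        exact Finset.mem_image.mpr ⟨⟨y, col x⟩,
          Finset.mem_sigma.mpr ⟨Finset.mem_univ _, Finset.mem_range.mpr hlt⟩, rfl⟩
      rcases lt_trichotomy (col u) (col v) with hlt | heq | hgt
      · obtain ⟨h1, h2⟩ := hmempay u v huv hlt
        exact ⟨pay v (col u), hpayin u v hlt, h1, h2⟩
      · refine ⟨cls (col u), ?_, (hmemcls _ _).mpr rfl, (hmemcls _ _).mpr heq.symm⟩
        rw [h𝒞def, Finset.mem_union]
        left
        refine Finset.mem_image.mpr ⟨col u, ?_, rfl⟩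
        rw [hTdef, Finset.mem_filter]
        refine ⟨Finset.mem_image_of_mem col (Finset.mem_univ u), ?_⟩
        exact Finset.one_lt_card.mpr
          ⟨u, (hmemcls _ _).mpr rfl, v, (hmemcls _ _).mpr heq.symm, hne⟩
      · obtain ⟨h1, h2⟩ := hmempay v u huv.symm hgt
        exact ⟨pay u (col v), hpayin v u hgt, h2, h1⟩
  -- cardinality of S
  have hScard : S.card ≤ Gᶜ.edgeFinset.card := by
    apply Finset.card_le_card_of_injOn (fun p => s(p.1, wit p.1 p.2))
    · intro p hps
      simp only [hSdef, Finset.mem_coe, Finset.mem_sigma, Finset.mem_range] at hps ⊢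
      obtain ⟨hw1, _⟩ := hwit p.1 p.2 hps.2
      rw [SimpleGraph.mem_edgeFinset, SimpleGraph.mem_edgeSet]
      exact hw1.symm
    · intro p hps q hqs heq
      simp only [Finset.mem_coe, hSdef, Finset.mem_sigma, Finset.mem_range] at hps hqs
      obtain ⟨ha1, ha2⟩ := hwit p.1 p.2 hps.2
      obtain ⟨hb1, hb2⟩ := hwit q.1 q.2 hqs.2
      rw [Sym2.eq_iff] at heq
      obtain ⟨pv, pc⟩ := p
      obtain ⟨qv, qc⟩ := q
      simp only at ha1 ha2 hb1 hb2 heq hps hqs ⊢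
      rcases heq with ⟨h1, h2⟩ | ⟨h1, h2⟩
      · have : pc = qc := by rw [← ha2, h2, hb2]
        subst h1; subst this; rfl
      · exfalso
        have e1 : col pv = qc := by rw [h1]; exact hb2
        have e2 : col qv = pc := by rw [← h2]; exact ha2
        have l1 : pc < col pv := hps.2
        have l2 : qc < col qv := hqs.2
        omega
  -- cardinality of T
  have hTcard : T.card ≤ t := by
    rcases Finset.eq_empty_or_nonempty T with hTe | ⟨c₁, hc₁⟩
    · rw [hTe]; simpa using Nat.zero_le t
    · have hVne : Nonempty V := by
        rw [hTdef, Finset.mem_filter] at hc₁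
        obtain ⟨v, _, _⟩ := Finset.mem_image.mp hc₁.1
        exact ⟨v⟩
      have hABex : ∀ c : ℕ, ∃ p : V × V,
          c ∈ T → (p.1 ∈ cls c ∧ p.2 ∈ cls c ∧ p.1 ≠ p.2) := by
        intro c
        by_cases h : c ∈ T
        · rw [hTdef, Finset.mem_filter] at h
          obtain ⟨a, haa, b, hbb, hab⟩ := Finset.one_lt_card.mp h.2
          exact ⟨(a, b), fun _ => ⟨haa, hbb, hab⟩⟩
        · exact ⟨(Classical.arbitrary V, Classical.arbitrary V), fun h' => absurd h' h⟩
      choose AB hAB using hABex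
      have hcolA : ∀ c ∈ T, col (AB c).1 = c := fun c hc => (hmemcls _ _).mp (hAB c hc).1
      have hcolB : ∀ c ∈ T, col (AB c).2 = c := fun c hc => (hmemcls _ _).mp (hAB c hc).2.1
      have hABne : ∀ c ∈ T, (AB c).1 ≠ (AB c).2 := fun c hc => (hAB c hc).2.2
      have key : T.offDiag.card ≤ Gᶜ.edgeFinset.card := by
        apply Finset.card_le_card_of_injOn (fun p =>
          if p.2 < p.1 then s((AB p.1).1, wit (AB p.1).1 p.2)
          else s((AB p.2).2, wit (AB p.2).2 p.1))
        · intro p hpd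
          simp only [Finset.mem_coe, Finset.mem_offDiag] at hpd ⊢
          obtain ⟨hp1, hp2, hpne⟩ := hpd
          by_cases h : p.2 < p.1
          · rw [if_pos h]
            have hc : p.2 < col (AB p.1).1 := by rw [hcolA p.1 hp1]; exact h
            obtain ⟨hw1, _⟩ := hwit _ _ hc
            rw [SimpleGraph.mem_edgeFinset, SimpleGraph.mem_edgeSet]
            exact hw1.symm
          · rw [if_neg h]
            have h' : p.1 < p.2 := by omega
            have hc : p.1 < col (AB p.2).2 := by rw [hcolB p.2 hp2]; exact h'
            obtain ⟨hw1, _⟩ := hwit _ _ hc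
            rw [SimpleGraph.mem_edgeFinset, SimpleGraph.mem_edgeSet]
            exact hw1.symm
        · intro p hpd q hqd heq
          simp only [Finset.mem_coe, Finset.mem_offDiag] at hpd hqd
          obtain ⟨hp1, hp2, hpne⟩ := hpd
          obtain ⟨hq1, hq2, hqne⟩ := hqd
          dsimp only at heq
          by_cases h1 : p.2 < p.1 <;> by_cases h2 : q.2 < q.1
          · rw [if_pos h1, if_pos h2] at heq
            have hcp : p.2 < col (AB p.1).1 := by rw [hcolA p.1 hp1]; exact h1
            have hcq : q.2 < col (AB q.1).1 := by rw [hcolA q.1 hq1]; exact h2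
            obtain ⟨_, hwp⟩ := hwit _ _ hcp
            obtain ⟨_, hwq⟩ := hwit _ _ hcq
            rw [Sym2.eq_iff] at heq
            rcases heq with ⟨e1, e2⟩ | ⟨e1, e2⟩
            · have : p.1 = q.1 := by rw [← hcolA p.1 hp1, e1, hcolA q.1 hq1]
              have h22 : p.2 = q.2 := by rw [← hwp, e2, hwq]
              exact Prod.ext this h22
            · exfalso
              have a1 : col (AB p.1).1 = p.1 := hcolA p.1 hp1
              have a2 : col (AB q.1).1 = q.1 := hcolA q.1 hq1
              rw [e1] at a1
              rw [← e2] at a2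
              rw [hwq] at a1
              rw [hwp] at a2
              omega
          · rw [if_pos h1, if_neg h2] at heq
            have h2' : q.1 < q.2 := by omega
            have hcp : p.2 < col (AB p.1).1 := by rw [hcolA p.1 hp1]; exact h1
            have hcq : q.1 < col (AB q.2).2 := by rw [hcolB q.2 hq2]; exact h2'
            obtain ⟨_, hwp⟩ := hwit _ _ hcp
            obtain ⟨_, hwq⟩ := hwit _ _ hcq
            rw [Sym2.eq_iff] at heq
            exfalso
            rcases heq with ⟨e1, e2⟩ | ⟨e1, e2⟩
            · have a1 : p.1 = q.2 := by
                rw [← hcolA p.1 hp1, e1, hcolB q.2 hq2]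
              have a2 : p.2 = q.1 := by rw [← hwp, e2, hwq]
              have : (AB p.1).1 = (AB p.1).2 := by
                rw [e1, a1]
              exact hABne p.1 hp1 this
            · have a1 : p.1 = q.1 := by rw [← hcolA p.1 hp1, e1, hwq]
              have a2 : p.2 = q.2 := by rw [← hwp, e2, hcolB q.2 hq2]
              omega
          · rw [if_neg h1, if_pos h2] at heq
            have h1' : p.1 < p.2 := by omega
            have hcp : p.1 < col (AB p.2).2 := by rw [hcolB p.2 hp2]; exact h1'
            have hcq : q.2 < col (AB q.1).1 := by rw [hcolA q.1 hq1]; exact h2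
            obtain ⟨_, hwp⟩ := hwit _ _ hcp
            obtain ⟨_, hwq⟩ := hwit _ _ hcq
            rw [Sym2.eq_iff] at heq
            exfalso
            rcases heq with ⟨e1, e2⟩ | ⟨e1, e2⟩
            · have a1 : p.2 = q.1 := by
                rw [← hcolB p.2 hp2, e1, hcolA q.1 hq1]
              have : (AB q.1).1 = (AB q.1).2 := by
                rw [← e1, a1]
              exact hABne q.1 hq1 this
            · have a1 : p.2 = q.2 := by rw [← hcolB p.2 hp2, e1, hwq]
              have a2 : p.1 = q.1 := by rw [← hwp, e2, hcolA q.1 hq1]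
              omega
          · rw [if_neg h1, if_neg h2] at heq
            have h1' : p.1 < p.2 := by omega
            have h2' : q.1 < q.2 := by omega
            have hcp : p.1 < col (AB p.2).2 := by rw [hcolB p.2 hp2]; exact h1'
            have hcq : q.1 < col (AB q.2).2 := by rw [hcolB q.2 hq2]; exact h2'
            obtain ⟨_, hwp⟩ := hwit _ _ hcp
            obtain ⟨_, hwq⟩ := hwit _ _ hcq
            rw [Sym2.eq_iff] at heq
            rcases heq with ⟨e1, e2⟩ | ⟨e1, e2⟩
            · have a1 : p.2 = q.2 := by rw [← hcolB p.2 hp2, e1, hcolB q.2 hq2]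
              have a2 : p.1 = q.1 := by rw [← hwp, e2, hwq]
              exact Prod.ext a2 a1
            · exfalso
              have a1 : p.2 = q.1 := by rw [← hcolB p.2 hp2, e1, hwq]
              have a2 : p.1 = q.2 := by rw [← hwp, e2, hcolB q.2 hq2]
              omega
      have hoff : T.card * T.card - T.card ≤ k := by
        rw [← Finset.offDiag_card]
        exact le_trans key hkc
      exact htmax _ hoff
  -- assemble
  have hcard : 𝒞.card ≤ k + t := by
    calc 𝒞.card ≤ (T.image cls).card + (S.image (fun p => pay p.1 p.2)).card := by
          rw [h𝒞def]; exact Finset.card_union_le _ _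
      _ ≤ T.card + S.card := add_le_add Finset.card_image_le Finset.card_image_le
      _ ≤ t + k := add_le_add hTcard (le_trans hScard hkc)
      _ = k + t := Nat.add_comm t k
  unfold edgeCliqueCoverNumber
  exact le_trans (Nat.sInf_le ⟨𝒞, hcover, rfl⟩) hcard
end
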